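/- arXiv:2302.01989 — 11 statements merged into one kernel-verified Lean document; each statement's English description precedes it below -/
import Mathlib

section
/- For every approval instance, every feasible committee that satisfies EJR+ also satisfies EJR. -/
/-- A feasible committee `W` satisfies EJR+: there is no candidate `c ∉ W`,
group of voters `N'`, and natural number `ℓ ≥ 1` with `|N'| ≥ ℓ·n/k` such that
`c ∈ A i` and `|A i ∩ W| < ℓ` for all `i ∈ N'`. -/
def EJRplus {V C : Type*} [Fintype V] [DecidableEq C]
    (A : V → Finset C) (k : ℕ) (W : Finset C) : Prop :=
  ¬ ∃ (c : C) (N' : Finset V) (ℓ : ℕ), 1 ≤ ℓ ∧ c ∉ W ∧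
      (ℓ : ℚ) * (Fintype.card V) / k ≤ N'.card ∧
      (∀ i ∈ N', c ∈ A i ∧ (A i ∩ W).card < ℓ)

/-- `N'` is an `ℓ`-cohesive group: `|N'| ≥ ℓ·n/k` and `|⋂_{i ∈ N'} A i| ≥ ℓ`. -/
def Cohesive {V C : Type*} [Fintype V] [Fintype C] [DecidableEq V] [DecidableEq C]
    (A : V → Finset C) (k ℓ : ℕ) (N' : Finset V) : Prop :=
  (ℓ : ℚ) * (Fintype.card V) / k ≤ N'.card ∧
    ℓ ≤ (Finset.univ.filter fun c : C => ∀ i ∈ N', c ∈ A i).card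

/-- A feasible committee `W` satisfies EJR: for every `ℓ ≥ 1` and every
`ℓ`-cohesive group `N'` there is a voter `i ∈ N'` with `|A i ∩ W| ≥ ℓ`. -/
def EJR {V C : Type*} [Fintype V] [Fintype C] [DecidableEq V] [DecidableEq C]
    (A : V → Finset C) (k : ℕ) (W : Finset C) : Prop :=
  ∀ ℓ : ℕ, 1 ≤ ℓ → ∀ N' : Finset V, Cohesive A k ℓ N' → ∃ i ∈ N', ℓ ≤ (A i ∩ W).card

/-- every feasible committee satisfying EJR+ also satisfies EJR. -/
theorem ejrplus_implies_ejr {V C : Type*} [Fintype V] [Fintype C] [DecidableEq V] [DecidableEq C]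
    (A : V → Finset C) (k : ℕ) (W : Finset C)
    (hn : 1 ≤ Fintype.card V) (hk1 : 1 ≤ k) (hk2 : k ≤ Fintype.card C)
    (hW : W.card ≤ k) (h : EJRplus A k W) :
    EJR A k W := by
  intro ℓ hℓ N' ⟨hsize, hcoh⟩
  by_contra hcon
  push_neg at hcon
  -- N' is nonempty
  have hNpos : 0 < (N'.card : ℚ) := by
    have h1 : (0:ℚ) < (ℓ : ℚ) * (Fintype.card V) / k := by
      apply div_pos
      · positivity
      · exact_mod_cast hk1
    linarith
  have hNne : N'.Nonempty := by
    rw [← Finset.card_pos]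
    exact_mod_cast hNpos
  set S := Finset.univ.filter fun c : C => ∀ i ∈ N', c ∈ A i with hS
  -- S is not a subset of W
  have hnotsub : ¬ S ⊆ W := by
    intro hsub
    obtain ⟨i, hi⟩ := hNne
    have hSA : S ⊆ A i ∩ W := by
      intro c hc
      rw [Finset.mem_inter]
      have hc' := hc
      rw [hS, Finset.mem_filter] at hc'
      exact ⟨hc'.2 i hi, hsub hc⟩
    have := Finset.card_le_card hSA
    have := hcon i hi
    omega
  obtain ⟨c, hcS, hcW⟩ := Finset.not_subset.mp hnotsub
  rw [hS, Finset.mem_filter] at hcS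
  exact h ⟨c, N', ℓ, hℓ, hcW, hsize, fun i hi => ⟨hcS.2 i hi, hcon i hi⟩⟩
end

section
/- For every approval instance, every feasible committee that is priceable with a price system whose budget B satisfies B > k also satisfies PJR+. -/
open Finset

/-- A price system for committee `W` with budget `B`: payment functions
`p i : C → [0, B/n]` satisfying conditions (C1)–(C5). -/
def PriceSystem {V C : Type*} [Fintype V] [Fintype C] [DecidableEq V] [DecidableEq C]
    (A : V → Finset C) (W : Finset C) (B : ℝ) (p : V → C → ℝ) : Prop :=
  (∀ i c, 0 ≤ p i c ∧ p i c ≤ B / (Fintype.card V)) ∧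
  -- (C1)
  (∀ i c, c ∉ A i → p i c = 0) ∧
  -- (C2)
  (∀ i : V, ∑ c : C, p i c ≤ B / (Fintype.card V)) ∧
  -- (C3)
  (∀ c ∈ W, ∑ i : V, p i c = 1) ∧
  -- (C4)
  (∀ c ∉ W, ∑ i : V, p i c = 0) ∧
  -- (C5)
  (∀ c ∉ W, ∑ i ∈ Finset.univ.filter (fun i => c ∈ A i),
      (B / (Fintype.card V) - ∑ c' : C, p i c') ≤ 1)

/-- A feasible committee `W` satisfies PJR+. -/
def PJRplus {V C : Type*} [Fintype V] [DecidableEq V] [DecidableEq C]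
    (A : V → Finset C) (k : ℕ) (W : Finset C) : Prop :=
  ¬ ∃ (c : C) (N' : Finset V) (ℓ : ℕ), 1 ≤ ℓ ∧ c ∉ W ∧
      (ℓ : ℚ) * (Fintype.card V) / k ≤ N'.card ∧
      (∀ i ∈ N', c ∈ A i) ∧ (N'.biUnion A ∩ W).card < ℓ

/-- every feasible committee that is priceable with a price system
whose budget `B` satisfies `B > k` also satisfies PJR+. -/
theorem priceable_implies_pjrplus {V C : Type*} [Fintype V] [Fintype C]
    [DecidableEq V] [DecidableEq C]
    (A : V → Finset C) (k : ℕ) (W : Finset C)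
    (hn : 1 ≤ Fintype.card V) (hk1 : 1 ≤ k) (hk2 : k ≤ Fintype.card C)
    (hW : W.card ≤ k)
    (B : ℝ) (hB0 : 0 < B) (hBk : (k : ℝ) < B)
    (p : V → C → ℝ) (hp : PriceSystem A W B p) :
    PJRplus A k W := by
  obtain ⟨hbound, hC1, hC2, hC3, hC4, hC5⟩ := hp
  rintro ⟨c, N', ℓ, hℓ, hcW, hcard, happr, hint⟩
  have hn0 : (0:ℝ) < (Fintype.card V : ℝ) := by exact_mod_cast hn
  have hk0 : (0:ℝ) < (k : ℝ) := by exact_mod_cast hk1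
  set n : ℝ := (Fintype.card V : ℝ) with hn'
  -- payments to non-committee candidates are zero
  have hpzero : ∀ i c', c' ∉ W → p i c' = 0 := by
    intro i c' hc'
    exact (Finset.sum_eq_zero_iff_of_nonneg (fun j _ => (hbound j c').1)).mp
      (hC4 c' hc') i (Finset.mem_univ i)
  set S := N'.biUnion A ∩ W with hS
  have hspend : ∀ i ∈ N', ∑ c' : C, p i c' = ∑ c' ∈ S, p i c' := by
    intro i hi
    rw [← Finset.sum_subset (Finset.subset_univ S)]
    intro x _ hx
    by_cases hxW : x ∈ W
    · by_cases hxA : x ∈ A i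
      · exact absurd (Finset.mem_inter.mpr ⟨Finset.mem_biUnion.mpr ⟨i, hi, hxA⟩, hxW⟩) hx
      · exact hC1 i x hxA
    · exact hpzero i x hxW
  have htot : ∑ i ∈ N', ∑ c' : C, p i c' ≤ (S.card : ℝ) := by
    calc ∑ i ∈ N', ∑ c' : C, p i c' = ∑ i ∈ N', ∑ c' ∈ S, p i c' :=
          Finset.sum_congr rfl hspend
      _ = ∑ c' ∈ S, ∑ i ∈ N', p i c' := Finset.sum_comm
      _ ≤ ∑ c' ∈ S, ∑ i : V, p i c' := by
          apply Finset.sum_le_sum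
          intro x _
          exact Finset.sum_le_sum_of_subset_of_nonneg (Finset.subset_univ N')
            (fun j _ _ => (hbound j x).1)
      _ = ∑ c' ∈ S, 1 := Finset.sum_congr rfl (fun x hx => hC3 x (Finset.mem_inter.mp hx).2)
      _ = (S.card : ℝ) := by simp
  have hScard : (S.card : ℝ) ≤ (ℓ : ℝ) - 1 := by
    have h1 : S.card + 1 ≤ ℓ := hint
    have h2 : ((S.card : ℝ) + 1) ≤ (ℓ : ℝ) := by exact_mod_cast h1
    linarith
  have hcardR : (ℓ : ℝ) * n / k ≤ (N'.card : ℝ) := by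
    have := hcard
    rw [div_le_iff₀ (by exact_mod_cast hk1 : (0:ℚ) < (k:ℚ))] at this
    have hnat : ℓ * Fintype.card V ≤ N'.card * k := by exact_mod_cast this
    rw [div_le_iff₀ hk0, hn']
    exact_mod_cast hnat
  -- leftover sum over N' exceeds 1
  have hleft : (1:ℝ) < ∑ i ∈ N', (B / n - ∑ c' : C, p i c') := by
    have heq : ∑ i ∈ N', (B / n - ∑ c' : C, p i c')
        = (N'.card : ℝ) * (B / n) - ∑ i ∈ N', ∑ c' : C, p i c' := by
      rw [Finset.sum_sub_distrib, Finset.sum_const, nsmul_eq_mul]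
    rw [heq]
    have hBn : (0:ℝ) ≤ B / n := le_of_lt (div_pos hB0 hn0)
    have h1 : (ℓ:ℝ) * n / k * (B / n) ≤ (N'.card : ℝ) * (B / n) :=
      mul_le_mul_of_nonneg_right hcardR hBn
    have h2 : (ℓ:ℝ) * n / k * (B / n) = (ℓ:ℝ) * (B / k) := by
      field_simp
    have hl0 : (0:ℝ) < (ℓ:ℝ) := by exact_mod_cast hℓ
    have h3 : (ℓ:ℝ) < (ℓ:ℝ) * (B / k) := by
      have : (1:ℝ) < B / k := (one_lt_div hk0).mpr hBk
      nlinarith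
    linarith
  -- contradiction with (C5)
  have hnneg : ∀ i : V, 0 ≤ B / n - ∑ c' : C, p i c' := fun i => sub_nonneg.mpr (hC2 i)
  have hsub : N' ⊆ Finset.univ.filter (fun i => c ∈ A i) := by
    intro i hi
    exact Finset.mem_filter.mpr ⟨Finset.mem_univ i, happr i hi⟩
  have hmono : ∑ i ∈ N', (B / n - ∑ c' : C, p i c')
      ≤ ∑ i ∈ Finset.univ.filter (fun i => c ∈ A i), (B / n - ∑ c' : C, p i c') :=
    Finset.sum_le_sum_of_subset_of_nonneg hsub (fun j _ _ => hnneg j)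
  have := hC5 c hcW
  linarith
end

section
/- For every approval instance, every committee W with |W| = k that maximizes the PAV score among all committees of size k satisfies EJR+. -/
open Finset

/-- The PAV score of a committee `W`: `∑_{i ∈ N} ∑_{j=1}^{|A i ∩ W|} 1/j`. -/
def pavScore {V C : Type*} [Fintype V] [DecidableEq C]
    (A : V → Finset C) (W : Finset C) : ℚ :=
  ∑ i : V, ∑ j ∈ Finset.range ((A i ∩ W).card), (1 : ℚ) / (j + 1)

lemma pavScore_insert {V C : Type*} [Fintype V] [DecidableEq C] (A : V → Finset C)
    (X : Finset C) (c : C) (hc : c ∉ X) :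
    pavScore A (insert c X) =
      pavScore A X + ∑ i : V, (if c ∈ A i then (1:ℚ)/(((A i ∩ X).card : ℚ) + 1) else 0) := by
  unfold pavScore
  rw [← Finset.sum_add_distrib]
  refine Finset.sum_congr rfl fun i _ => ?_
  by_cases h : c ∈ A i
  · have he : A i ∩ insert c X = insert c (A i ∩ X) :=
      Finset.inter_insert_of_mem h
    rw [he, Finset.card_insert_of_notMem (by simp [hc]), Finset.sum_range_succ]
    simp [h]
  · have he : A i ∩ insert c X = A i ∩ X := by
      ext x; simp only [Finset.mem_inter, Finset.mem_insert]
      constructor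
      · rintro ⟨hx, hx2 | hx2⟩
        · exact absurd (hx2 ▸ hx) h
        · exact ⟨hx, hx2⟩
      · rintro ⟨hx, hx2⟩; exact ⟨hx, Or.inr hx2⟩
    simp [he, h]

lemma inter_erase_eq {C : Type*} [DecidableEq C] (s t : Finset C) (w : C) :
    s ∩ t.erase w = (s ∩ t).erase w := by
  ext x
  simp only [Finset.mem_inter, Finset.mem_erase]
  tauto

/-- every committee of size `k` maximizing the PAV score among all
committees of size `k` satisfies EJR+. -/
theorem pav_satisfies_ejrplus {V C : Type*} [Fintype V] [Fintype C]
    [DecidableEq V] [DecidableEq C]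
    (A : V → Finset C) (k : ℕ) (W : Finset C)
    (hn : 1 ≤ Fintype.card V) (hk1 : 1 ≤ k) (hk2 : k ≤ Fintype.card C)
    (hWcard : W.card = k)
    (hmax : ∀ W' : Finset C, W'.card = k → pavScore A W' ≤ pavScore A W) :
    EJRplus A k W := by
  rintro ⟨c, N', ℓ, hℓ, hcW, hsize, hN'⟩
  have hn0 : (0:ℚ) < (Fintype.card V : ℚ) := by exact_mod_cast hn
  have hk0 : (0:ℚ) < (k:ℚ) := by exact_mod_cast hk1
  have hl0 : (0:ℚ) < (ℓ:ℚ) := by exact_mod_cast hℓ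
  -- the per-swap difference formula
  have hdiff : ∀ w ∈ W, pavScore A (insert c (W.erase w)) - pavScore A W
      = ∑ i : V, ((if c ∈ A i then (1:ℚ)/(((A i ∩ (W.erase w)).card : ℚ) + 1) else 0)
                - (if w ∈ A i then (1:ℚ)/((A i ∩ W).card : ℚ) else 0)) := by
    intro w hw
    have hcnot : c ∉ W.erase w := fun h => hcW (Finset.mem_of_mem_erase h)
    have h1 := pavScore_insert A (W.erase w) c hcnot
    have h2 := pavScore_insert A (W.erase w) w (Finset.notMem_erase w W)
    rw [Finset.insert_erase hw] at h2
    have hL : ∑ i : V, (if w ∈ A i then (1:ℚ)/(((A i ∩ (W.erase w)).card:ℚ) + 1) else 0)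
        = ∑ i : V, (if w ∈ A i then (1:ℚ)/((A i ∩ W).card:ℚ) else 0) := by
      refine Finset.sum_congr rfl fun i _ => ?_
      by_cases h : w ∈ A i
      · simp only [h, if_true]
        congr 1
        have hmem : w ∈ A i ∩ W := Finset.mem_inter.2 ⟨h, hw⟩
        have hpos : 1 ≤ (A i ∩ W).card := Finset.card_pos.2 ⟨w, hmem⟩
        rw [inter_erase_eq, Finset.card_erase_of_mem hmem, Nat.cast_sub hpos]
        push_cast
        ring
      · simp [h]
    rw [h1, h2, hL, Finset.sum_sub_distrib]
    ring
  -- per-voter lower bound on the summed differences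
  have hbound : ∀ i : V,
      (if i ∈ N' then ((k:ℚ)+1)/(ℓ:ℚ) - 1 else -1) ≤
      ∑ w ∈ W, ((if c ∈ A i then (1:ℚ)/(((A i ∩ (W.erase w)).card:ℚ) + 1) else 0)
              - (if w ∈ A i then (1:ℚ)/((A i ∩ W).card:ℚ) else 0)) := by
    intro i
    have hfilter : (W.filter (fun w => w ∈ A i)).card = (A i ∩ W).card := by
      congr 1
      ext x; simp only [Finset.mem_filter, Finset.mem_inter]; tauto
    by_cases hi : i ∈ N'
    · obtain ⟨hci, hsi⟩ := hN' i hi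
      simp only [hi, if_true]
      have hterm : ∀ w ∈ W, (if w ∈ A i then 0 else (1:ℚ)/(ℓ:ℚ)) ≤
          ((if c ∈ A i then (1:ℚ)/(((A i ∩ (W.erase w)).card:ℚ) + 1) else 0)
              - (if w ∈ A i then (1:ℚ)/((A i ∩ W).card:ℚ) else 0)) := by
        intro w hw
        simp only [hci, if_true]
        by_cases h : w ∈ A i
        · simp only [h, if_true]
          have hmem : w ∈ A i ∩ W := Finset.mem_inter.2 ⟨h, hw⟩
          have hpos : 1 ≤ (A i ∩ W).card := Finset.card_pos.2 ⟨w, hmem⟩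
          rw [inter_erase_eq, Finset.card_erase_of_mem hmem, Nat.cast_sub hpos]
          push_cast
          simp
        · simp only [h, if_false, sub_zero]
          have he : A i ∩ W.erase w = A i ∩ W := by
            rw [inter_erase_eq, Finset.erase_eq_of_notMem]
            simp [h]
          rw [he]
          have hle : ((A i ∩ W).card:ℚ) + 1 ≤ (ℓ:ℚ) := by
            have : (A i ∩ W).card + 1 ≤ ℓ := hsi
            exact_mod_cast this
          have hp : (0:ℚ) < ((A i ∩ W).card:ℚ) + 1 := by positivity
          exact one_div_le_one_div_of_le hp hle
      have hsum1 : ∑ w ∈ W, (if w ∈ A i then 0 else (1:ℚ)/(ℓ:ℚ))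
          = ((W.card:ℚ) - ((A i ∩ W).card:ℚ)) * (1/(ℓ:ℚ)) := by
        rw [Finset.sum_ite, Finset.sum_const, Finset.sum_const, smul_zero, zero_add,
          nsmul_eq_mul]
        congr 1
        have h2 : (W.filter (fun w => ¬ w ∈ A i)).card
            = W.card - (W.filter (fun w => w ∈ A i)).card := by
          rw [eq_tsub_iff_add_eq_of_le (Finset.card_filter_le _ _), add_comm]
          exact Finset.card_filter_add_card_filter_not _
        rw [h2, hfilter, Nat.cast_sub]
        exact le_trans (Nat.le_of_eq (hfilter.symm)) (Finset.card_filter_le _ _)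
      calc ((k:ℚ)+1)/(ℓ:ℚ) - 1 ≤ ((W.card:ℚ) - ((A i ∩ W).card:ℚ)) * (1/(ℓ:ℚ)) := by
            rw [hWcard]
            have hsℓ : ((A i ∩ W).card:ℚ) ≤ (ℓ:ℚ) - 1 := by
              have : (A i ∩ W).card + 1 ≤ ℓ := hsi
              have := (Nat.cast_le (α := ℚ)).2 this
              push_cast at this
              linarith
            rw [div_sub_one (ne_of_gt hl0), mul_one_div, div_le_div_iff₀ hl0 hl0]
            nlinarith
        _ = ∑ w ∈ W, (if w ∈ A i then 0 else (1:ℚ)/(ℓ:ℚ)) := hsum1.symm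
        _ ≤ _ := Finset.sum_le_sum hterm
    · simp only [hi, if_false]
      have hg : (0:ℚ) ≤ ∑ w ∈ W, (if c ∈ A i then (1:ℚ)/(((A i ∩ (W.erase w)).card:ℚ) + 1) else 0) := by
        refine Finset.sum_nonneg fun w _ => ?_
        by_cases h : c ∈ A i <;> simp [h] <;> positivity
      have hl : ∑ w ∈ W, (if w ∈ A i then (1:ℚ)/((A i ∩ W).card:ℚ) else 0) ≤ 1 := by
        rw [Finset.sum_ite, Finset.sum_const, Finset.sum_const, smul_zero, add_zero,
          nsmul_eq_mul, hfilter]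
        rcases Nat.eq_zero_or_pos (A i ∩ W).card with h0 | h0
        · simp [h0]
        · have : ((A i ∩ W).card:ℚ) ≠ 0 := by positivity
          rw [mul_one_div, div_self this]
      rw [Finset.sum_sub_distrib]
      linarith
  -- total positivity
  have hsum : 0 < ∑ w ∈ W, (pavScore A (insert c (W.erase w)) - pavScore A W) := by
    have e1 : ∑ w ∈ W, (pavScore A (insert c (W.erase w)) - pavScore A W)
        = ∑ i : V, ∑ w ∈ W, ((if c ∈ A i then (1:ℚ)/(((A i ∩ (W.erase w)).card:ℚ) + 1) else 0)
              - (if w ∈ A i then (1:ℚ)/((A i ∩ W).card:ℚ) else 0)) := by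
      rw [Finset.sum_congr rfl hdiff]
      exact Finset.sum_comm
    rw [e1]
    have e2 : ∑ i : V, (if i ∈ N' then ((k:ℚ)+1)/(ℓ:ℚ) - 1 else (-1:ℚ))
        = (N'.card:ℚ) * (((k:ℚ)+1)/(ℓ:ℚ)) - (Fintype.card V : ℚ) := by
      rw [Finset.sum_ite, Finset.sum_const, Finset.sum_const]
      have hf1 : Finset.univ.filter (fun i => i ∈ N') = N' := Finset.filter_univ_mem N'
      have hf2 : (Finset.univ.filter (fun i => ¬ i ∈ N')).card = Fintype.card V - N'.card := by
        rw [Finset.filter_not, hf1]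
        simp [Finset.card_sdiff_of_subset (Finset.subset_univ N'), Finset.card_univ]
      rw [hf1, hf2, nsmul_eq_mul, nsmul_eq_mul, Nat.cast_sub (Finset.card_le_univ N')]
      push_cast
      ring
    have hc2 : (0:ℚ) < (N'.card:ℚ) := lt_of_lt_of_le (by positivity) hsize
    have hc1 : (ℓ:ℚ) * (Fintype.card V : ℚ) ≤ (N'.card:ℚ) * (k:ℚ) := by
      rw [div_le_iff₀ hk0] at hsize
      linarith
    calc (0:ℚ) < (N'.card:ℚ) * (((k:ℚ)+1)/(ℓ:ℚ)) - (Fintype.card V : ℚ) := by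
          rw [sub_pos, mul_div_assoc', lt_div_iff₀ hl0]
          nlinarith
      _ = ∑ i : V, (if i ∈ N' then ((k:ℚ)+1)/(ℓ:ℚ) - 1 else (-1:ℚ)) := e2.symm
      _ ≤ _ := Finset.sum_le_sum fun i _ => hbound i
  -- extract a strictly improving swap
  have hsum' : ∑ w ∈ W, (0:ℚ) < ∑ w ∈ W, (pavScore A (insert c (W.erase w)) - pavScore A W) := by
    simpa using hsum
  obtain ⟨w, hw, hlt⟩ := Finset.exists_lt_of_sum_lt hsum'
  have hcnot : c ∉ W.erase w := fun h => hcW (Finset.mem_of_mem_erase h)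
  have hcard : (insert c (W.erase w)).card = k := by
    rw [Finset.card_insert_of_notMem hcnot, Finset.card_erase_of_mem hw, hWcard]
    omega
  have := hmax _ hcard
  linarith
end

section
/- For every approval instance, there exists a committee W ⊆ C with |W| ≤ k that satisfies EJR+. -/
open Finset

noncomputable def harm (m : ℕ) : ℚ := ∑ j ∈ Finset.range m, 1/(j+1)

lemma harm_succ (m : ℕ) : harm (m+1) = harm m + 1/(m+1) := by
  simp [harm, Finset.sum_range_succ]

noncomputable def pav {V C : Type*} [Fintype V] [DecidableEq C]
    (A : V → Finset C) (W : Finset C) : ℚ :=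
  ∑ i, harm ((A i ∩ W).card)

lemma inter_insert_mem {C : Type*} [DecidableEq C] (s W : Finset C) (c : C) (h : c ∈ s) :
    s ∩ insert c W = insert c (s ∩ W) := by
  ext x
  simp only [Finset.mem_inter, Finset.mem_insert]
  constructor
  · tauto
  · rintro (rfl | ⟨hx, hw⟩) <;> tauto

lemma inter_insert_notMem {C : Type*} [DecidableEq C] (s W : Finset C) (c : C) (h : c ∉ s) :
    s ∩ insert c W = s ∩ W := by
  ext x
  simp only [Finset.mem_inter, Finset.mem_insert]
  constructor
  · rintro ⟨hx, rfl | hw⟩ <;> tauto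
  · tauto

lemma pav_insert {V C : Type*} [Fintype V] [DecidableEq C]
    (A : V → Finset C) (W : Finset C) (c : C) (hc : c ∉ W) :
    pav A (insert c W) = pav A W +
      ∑ i ∈ Finset.univ.filter (fun i => c ∈ A i), 1/(((A i ∩ W).card : ℚ)+1) := by
  rw [Finset.sum_filter]
  unfold pav
  rw [← Finset.sum_add_distrib]
  apply Finset.sum_congr rfl
  intro i _
  by_cases h : c ∈ A i
  · have h2 : c ∉ A i ∩ W := by simp [hc]
    rw [inter_insert_mem _ _ _ h, Finset.card_insert_of_notMem h2, harm_succ]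
    simp [h]
  · rw [inter_insert_notMem _ _ _ h]; simp [h]

lemma pav_erase {V C : Type*} [Fintype V] [DecidableEq C]
    (A : V → Finset C) (T : Finset C) (c' : C) (hc' : c' ∈ T) :
    pav A T = pav A (T.erase c') +
      ∑ i ∈ Finset.univ.filter (fun i => c' ∈ A i), 1/(((A i ∩ T).card : ℚ)) := by
  have h1 : insert c' (T.erase c') = T := Finset.insert_erase hc'
  have h2 := pav_insert A (T.erase c') c' (Finset.notMem_erase _ _)
  rw [h1] at h2
  rw [h2]
  congr 1
  apply Finset.sum_congr rfl
  intro i hi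
  simp only [Finset.mem_filter] at hi
  have : A i ∩ T.erase c' = (A i ∩ T).erase c' := by
    ext x; simp [Finset.mem_erase]; tauto
  rw [this, Finset.card_erase_of_mem (by simp [hi.2, hc'])]
  have hpos : 0 < (A i ∩ T).card := Finset.card_pos.2 ⟨c', by simp [hi.2, hc']⟩
  rw [Nat.cast_sub hpos]
  ring_nf

/-- for every approval instance there exists a committee `W` with
`|W| ≤ k` satisfying EJR+. -/
theorem exists_ejrplus_committee {V C : Type*} [Fintype V] [Fintype C]
    [DecidableEq V] [DecidableEq C]
    (A : V → Finset C) (k : ℕ)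
    (hn : 1 ≤ Fintype.card V) (hk1 : 1 ≤ k) (hk2 : k ≤ Fintype.card C) :
    ∃ W : Finset C, W.card ≤ k ∧ EJRplus A k W := by
  classical
  obtain ⟨W, hWmem, hmax⟩ := Finset.exists_max_image
    ((Finset.univ : Finset C).powersetCard k) (pav A)
    (Finset.powersetCard_nonempty.2 (by simpa using hk2))
  have hWcard : W.card = k := (Finset.mem_powersetCard.1 hWmem).2
  refine ⟨W, hWcard.le, ?_⟩
  rintro ⟨c, N', ℓ, hℓ, hcW, hsize, hprop⟩
  set n := Fintype.card V with hn_def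
  have hk0 : (0:ℚ) < k := by exact_mod_cast hk1
  have hn0 : (0:ℚ) < n := by exact_mod_cast hn
  have hℓ0 : (0:ℚ) < ℓ := by exact_mod_cast hℓ
  set T : Finset C := insert c W with hT_def
  -- gain from adding c
  set G : ℚ := ∑ i ∈ Finset.univ.filter (fun i => c ∈ A i),
      1/(((A i ∩ W).card : ℚ)+1) with hG_def
  have hGgain : (n:ℚ)/k ≤ G := by
    have h1 : (n:ℚ)/k ≤ N'.card / ℓ := by
      rw [div_le_div_iff₀ hk0 hℓ0]
      rw [div_le_iff₀ hk0] at hsize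
      nlinarith
    have h2 : (N'.card : ℚ)/ℓ ≤ ∑ i ∈ N', 1/(((A i ∩ W).card : ℚ)+1) := by
      have he : ∑ _i ∈ N', (1/(ℓ:ℚ)) = (N'.card : ℚ)/ℓ := by
        rw [Finset.sum_const, nsmul_eq_mul, mul_one_div]
      rw [← he]
      apply Finset.sum_le_sum
      intro i hi
      apply one_div_le_one_div_of_le
      · positivity
      · have := (hprop i hi).2
        have : ((A i ∩ W).card : ℚ) + 1 ≤ ℓ := by exact_mod_cast this
        linarith
    have h3 : ∑ i ∈ N', 1/(((A i ∩ W).card : ℚ)+1) ≤ G := by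
      apply Finset.sum_le_sum_of_subset_of_nonneg
      · intro i hi
        simp only [Finset.mem_filter, Finset.mem_univ, true_and]
        exact (hprop i hi).1
      · intro i _ _; positivity
    linarith
  -- losses
  set L : C → ℚ := fun c' => ∑ i ∈ Finset.univ.filter (fun i => c' ∈ A i),
      1/(((A i ∩ T).card : ℚ)) with hL_def
  have hLsum : ∑ c' ∈ W, L c' ≤ (n:ℚ) - (n:ℚ)/k := by
    have hswap : ∑ c' ∈ W, L c'
        = ∑ i : V, ((A i ∩ W).card : ℚ) / ((A i ∩ T).card : ℚ) := by
      simp only [hL_def, Finset.sum_filter]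
      rw [Finset.sum_comm]
      apply Finset.sum_congr rfl
      intro i _
      rw [← Finset.sum_filter, Finset.sum_const, nsmul_eq_mul]
      have : (W.filter (fun c' => c' ∈ A i)).card = (A i ∩ W).card := by
        congr 1
        ext x; simp [Finset.mem_filter, Finset.mem_inter, and_comm]
      rw [this, mul_one_div]
    rw [hswap]
    have hbound : ∀ i : V, ((A i ∩ W).card : ℚ) / ((A i ∩ T).card : ℚ)
        ≤ 1 - (if i ∈ N' then 1/(ℓ:ℚ) else 0) := by
      intro i
      by_cases hi : i ∈ N'
      · have hci : c ∈ A i := (hprop i hi).1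
        have hlt := (hprop i hi).2
        have hTi : A i ∩ T = insert c (A i ∩ W) := inter_insert_mem _ _ _ hci
        have hcni : c ∉ A i ∩ W := by simp [hcW]
        rw [hTi, Finset.card_insert_of_notMem hcni]
        simp only [hi, if_true]
        set m : ℕ := (A i ∩ W).card
        have hm : (m:ℚ) + 1 ≤ ℓ := by exact_mod_cast hlt
        have hm0 : (0:ℚ) < (m:ℚ) + 1 := by positivity
        rw [Nat.cast_add, Nat.cast_one, div_le_iff₀ hm0]
        have h1ℓ : 1/(ℓ:ℚ) ≤ 1/((m:ℚ)+1) := one_div_le_one_div_of_le hm0 hm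
        have heq : (1 - 1/(ℓ:ℚ)) * ((m:ℚ)+1) = (m:ℚ) + 1 - ((m:ℚ)+1)/ℓ := by ring
        rw [heq]
        have hle1 : ((m:ℚ)+1)/ℓ ≤ 1 := by
          rw [div_le_one hℓ0]; linarith
        linarith
      · simp only [hi, if_false, sub_zero]
        have hsub : A i ∩ W ⊆ A i ∩ T :=
          Finset.inter_subset_inter (Finset.Subset.refl _) (Finset.subset_insert _ _)
        by_cases hz : (A i ∩ T).card = 0
        · have h0 : (A i ∩ W).card = 0 := by
            have := Finset.card_le_card hsub
            omega
          rw [h0, hz]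
          norm_num
        · rw [div_le_one (by exact_mod_cast Nat.pos_of_ne_zero hz)]
          exact_mod_cast Finset.card_le_card hsub
    calc ∑ i : V, ((A i ∩ W).card : ℚ) / ((A i ∩ T).card : ℚ)
        ≤ ∑ i : V, (1 - (if i ∈ N' then 1/(ℓ:ℚ) else 0)) :=
          Finset.sum_le_sum (fun i _ => hbound i)
      _ = (n:ℚ) - (N'.card : ℚ) * (1/ℓ) := by
          rw [Finset.sum_sub_distrib]
          congr 1
          · simp [hn_def]
          · rw [Finset.sum_ite_mem, Finset.univ_inter, Finset.sum_const, nsmul_eq_mul]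
      _ ≤ (n:ℚ) - (n:ℚ)/k := by
          have h1 : (n:ℚ)/k ≤ (N'.card : ℚ) * (1/ℓ) := by
            rw [mul_one_div]
            rw [div_le_div_iff₀ hk0 hℓ0]
            rw [div_le_iff₀ hk0] at hsize
            nlinarith
          linarith
  -- pick best c' to remove
  have hWne : W.Nonempty := Finset.card_pos.1 (by omega)
  obtain ⟨c', hc'W, hc'min⟩ := W.exists_min_image L hWne
  have hLc' : (k:ℚ) * L c' ≤ ∑ b ∈ W, L b := by
    calc (k:ℚ) * L c' = ∑ _b ∈ W, L c' := by
          rw [Finset.sum_const, nsmul_eq_mul, hWcard]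
      _ ≤ ∑ b ∈ W, L b := Finset.sum_le_sum (fun b hb => hc'min b hb)
  have hLlt : L c' < (n:ℚ)/k := by
    have h1 : (k:ℚ) * L c' ≤ (n:ℚ) - (n:ℚ)/k := le_trans hLc' hLsum
    have hq : (n:ℚ)/k * k = n := div_mul_cancel₀ _ (ne_of_gt hk0)
    have hq0 : (0:ℚ) < (n:ℚ)/k := by positivity
    nlinarith
  -- the swap
  have hc'T : c' ∈ T := Finset.mem_insert_of_mem hc'W
  have hpavT : pav A T = pav A W + G := pav_insert A W c hcW
  have hpavE : pav A T = pav A (T.erase c') + L c' := pav_erase A T c' hc'T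
  have hW'' : T.erase c' ∈ (Finset.univ : Finset C).powersetCard k := by
    rw [Finset.mem_powersetCard]
    constructor
    · intro x _; exact Finset.mem_univ x
    · rw [Finset.card_erase_of_mem hc'T, hT_def, Finset.card_insert_of_notMem hcW, hWcard]
      omega
  have := hmax _ hW''
  have hcontra : pav A W < pav A (T.erase c') := by linarith
  linarith
end

section
/- For every approval instance and every committee size k with k < |C|, there exist a committee W ⊆ C with |W| = k and a candidate c ∈ C∖W such that W satisfies EJR+ with respect to committee size k and W ∪ {c} satisfies EJR+ with respect to committee size k+1. -/
namespace EJRaux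

set_option maxHeartbeats 4000000

variable {V C : Type*} [Fintype V] [DecidableEq V] [DecidableEq C]

def H (m : ℕ) : ℚ := ∑ s ∈ Finset.range m, 1/(s+1)

lemma H_succ (m : ℕ) : H (m+1) = H m + 1/(m+1) := by
  simp [H, Finset.sum_range_succ]

lemma card_inter_insert (B S : Finset C) (c : C) (hc : c ∉ S) :
    (B ∩ insert c S).card = (B ∩ S).card + (if c ∈ B then 1 else 0) := by
  by_cases h : c ∈ B
  · rw [Finset.inter_insert_of_mem h, Finset.card_insert_of_notMem (by simp [hc]), if_pos h]
  · simp [Finset.inter_insert_of_notMem h, h]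

lemma card_inter_erase (B S : Finset C) (w : C) (hw : w ∈ S) :
    ((B ∩ S.erase w).card : ℚ) = ((B ∩ S).card : ℚ) - (if w ∈ B then 1 else 0) := by
  rw [Finset.inter_erase]
  by_cases h : w ∈ B
  · rw [Finset.card_erase_of_mem (Finset.mem_inter.2 ⟨h, hw⟩), if_pos h,
      Nat.cast_sub (Nat.one_le_iff_ne_zero.2 (Finset.card_ne_zero_of_mem (Finset.mem_inter.2 ⟨h, hw⟩)))]
    simp
  · rw [Finset.erase_eq_of_notMem (by simp [h]), if_neg h]
    simp

def score (A : V → Finset C) (W : Finset C) : ℚ := ∑ i : V, H ((A i ∩ W).card)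

def F (A : V → Finset C) (W : Finset C) (c : C) : ℚ :=
  ∑ i : V, (if c ∈ A i then ((W.card : ℚ)+1)/(((A i ∩ W).card : ℚ)+1) - 1
            else if (A i ∩ W).card = 0 then 0 else -1)

lemma swap_diff (B S : Finset C) (c w : C) (hc : c ∉ S) (hw : w ∈ S) :
    H ((B ∩ insert c (S.erase w)).card) - H ((B ∩ S).card) =
      if c ∈ B then (if w ∈ B then 0 else 1/(((B ∩ S).card : ℚ)+1))
      else (if w ∈ B then -1/((B ∩ S).card : ℚ) else 0) := by
  have hce : c ∉ S.erase w := fun h => hc (Finset.mem_of_mem_erase h)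
  have hkey : (B ∩ insert c (S.erase w)).card
      = (B ∩ S.erase w).card + (if c ∈ B then 1 else 0) := by
    by_cases h : c ∈ B
    · rw [Finset.inter_insert_of_mem h,
        Finset.card_insert_of_notMem (by simp [hce]), if_pos h]
    · simp [Finset.inter_insert_of_notMem h, h]
  rw [Finset.inter_erase] at hkey
  by_cases hwB : w ∈ B
  · have hmem : w ∈ B ∩ S := Finset.mem_inter.2 ⟨hwB, hw⟩
    have hpos : 1 ≤ (B ∩ S).card := Nat.one_le_iff_ne_zero.2 (Finset.card_ne_zero_of_mem hmem)
    obtain ⟨v, hv⟩ : ∃ v, (B ∩ S).card = v + 1 := ⟨(B ∩ S).card - 1, by omega⟩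
    rw [Finset.card_erase_of_mem hmem, hv] at hkey
    by_cases h : c ∈ B
    · rw [if_pos h] at hkey; rw [if_pos h, if_pos hwB]
      have : (B ∩ insert c (S.erase w)).card = v + 1 := by omega
      rw [this, hv]; ring
    · rw [if_neg h] at hkey; rw [if_neg h, if_pos hwB]
      have : (B ∩ insert c (S.erase w)).card = v := by omega
      rw [this, hv, H_succ]
      push_cast; ring
  · have : (B ∩ S).erase w = B ∩ S := Finset.erase_eq_of_notMem (by simp [hwB])
    rw [this] at hkey
    by_cases h : c ∈ B
    · rw [if_pos h] at hkey; rw [if_pos h, if_neg hwB, hkey, H_succ]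
      push_cast; ring
    · rw [if_neg h] at hkey; rw [if_neg h, if_neg hwB, hkey]; ring

lemma sum_swap (A : V → Finset C) (S : Finset C) (c : C) (hc : c ∉ S) :
    ∑ w ∈ S, (score A (insert c (S.erase w)) - score A S) = F A S c := by
  have h1 : ∀ w ∈ S, score A (insert c (S.erase w)) - score A S
      = ∑ i : V, (H ((A i ∩ insert c (S.erase w)).card) - H ((A i ∩ S).card)) := by
    intro w hw; rw [score, score, ← Finset.sum_sub_distrib]
  rw [Finset.sum_congr rfl h1, Finset.sum_comm]
  refine Finset.sum_congr rfl fun i _ => ?_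
  rw [Finset.sum_congr rfl (fun w hw => swap_diff (A i) S c w hc hw)]
  have hcardmem : (S.filter (· ∈ A i)).card = (A i ∩ S).card := by
    rw [Finset.filter_mem_eq_inter, Finset.inter_comm]
  have hle : (A i ∩ S).card ≤ S.card := Finset.card_le_card Finset.inter_subset_right
  by_cases h : c ∈ A i
  · simp only [if_pos h]
    rw [Finset.sum_ite, Finset.sum_const, Finset.sum_const, hcardmem]
    have hc2 : (S.filter (fun w => ¬ w ∈ A i)).card = S.card - (A i ∩ S).card := by
      have := Finset.card_filter_add_card_filter_not (s := S) (p := (· ∈ A i))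
      omega
    rw [hc2, smul_zero, zero_add, nsmul_eq_mul, Nat.cast_sub hle]
    have hne : ((A i ∩ S).card : ℚ) + 1 ≠ 0 := by positivity
    field_simp
    ring
  · simp only [if_neg h]
    rw [Finset.sum_ite, Finset.sum_const, Finset.sum_const, hcardmem]
    by_cases hu : (A i ∩ S).card = 0
    · simp [hu]
    · rw [if_neg hu, smul_zero, add_zero, nsmul_eq_mul]
      have hne : ((A i ∩ S).card : ℚ) ≠ 0 := by
        exact_mod_cast hu
      field_simp




def g (A : V → Finset C) (W : Finset C) (c : C) : ℚ :=
  ∑ i : V, (if c ∈ A i then 1/(((A i ∩ W).card : ℚ)+1) else 0)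

lemma F_eq_g (A : V → Finset C) (W : Finset C) (c : C) :
    F A W c = ((W.card : ℚ)+1) * g A W c
      - ((Finset.univ.filter (fun i => c ∈ A i ∨ (A i ∩ W).card ≠ 0)).card : ℚ) := by
  have hcount : ((Finset.univ.filter (fun i => c ∈ A i ∨ (A i ∩ W).card ≠ 0)).card : ℚ)
      = ∑ i : V, (if c ∈ A i ∨ (A i ∩ W).card ≠ 0 then (1:ℚ) else 0) := by
    rw [Finset.sum_boole]
  rw [hcount, g, Finset.mul_sum, ← Finset.sum_sub_distrib, F]
  refine Finset.sum_congr rfl fun i _ => ?_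
  by_cases h : c ∈ A i
  · have : c ∈ A i ∨ (A i ∩ W).card ≠ 0 := Or.inl h
    rw [if_pos h, if_pos h, if_pos this]
    ring
  · rw [if_neg h, if_neg h]
    by_cases h2 : (A i ∩ W).card = 0
    · rw [if_pos h2, if_neg (by simp [h, h2])]
      ring
    · rw [if_neg h2, if_pos (Or.inr h2)]
      ring

section Opt

variable (A : V → Finset C)

lemma swap_card {W : Finset C} {w c : C} (hw : w ∈ W) (hc : c ∉ W) :
    (insert c (W.erase w)).card = W.card := by
  have h1 : 1 ≤ W.card := Nat.one_le_iff_ne_zero.2 (Finset.card_ne_zero_of_mem hw)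
  rw [Finset.card_insert_of_notMem (fun h => hc (Finset.mem_of_mem_erase h)),
    Finset.card_erase_of_mem hw]
  omega

variable {k : ℕ} {W : Finset C}
  (hW : W.card = k)
  (hopt : ∀ S : Finset C, S.card = k → score A S ≤ score A W)

include hW hopt in
lemma F_nonpos {c : C} (hc : c ∉ W) : F A W c ≤ 0 := by
  rw [← sum_swap A W c hc]
  refine Finset.sum_nonpos fun w hw => sub_nonpos.2 (hopt _ ?_)
  rw [swap_card hw hc, hW]

include hW hopt in
lemma F_eq_zero_swap {c : C} (hc : c ∉ W) (hF : F A W c = 0) :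
    ∀ w ∈ W, score A (insert c (W.erase w)) = score A W := by
  intro w hw
  have h0 : ∀ x ∈ W, score A (insert c (W.erase x)) - score A W ≤ 0 := by
    intro x hx
    refine sub_nonpos.2 (hopt _ ?_)
    rw [swap_card hx hc, hW]
  rw [← sum_swap A W c hc] at hF
  have := (Finset.sum_eq_zero_iff_of_nonpos h0).1 hF w hw
  linarith

/-- Generic lower bound on F from a "violating" group. -/
lemma F_lower (S : Finset C) (c : C) (N' : Finset V) (ℓ : ℕ) (hl : 1 ≤ ℓ)
    (hprop : ∀ i ∈ N', c ∈ A i ∧ (A i ∩ S).card < ℓ) :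
    (N'.card : ℚ) * (((S.card : ℚ) + 1)/(ℓ : ℚ)) - (Fintype.card V) ≤ F A S c := by
  classical
  have hsub : N' ⊆ Finset.univ := Finset.subset_univ _
  rw [F, ← Finset.sum_sdiff hsub]
  have hb1 : ∑ _i ∈ Finset.univ \ N', (-1:ℚ) ≤ ∑ i ∈ Finset.univ \ N',
      (if c ∈ A i then ((S.card : ℚ)+1)/(((A i ∩ S).card : ℚ)+1) - 1
       else if (A i ∩ S).card = 0 then 0 else -1) := by
    refine Finset.sum_le_sum fun i _ => ?_
    by_cases h : c ∈ A i
    · rw [if_pos h]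
      have : (0:ℚ) ≤ ((S.card : ℚ)+1)/(((A i ∩ S).card : ℚ)+1) := by positivity
      linarith
    · rw [if_neg h]
      by_cases h2 : (A i ∩ S).card = 0 <;> simp [h2]
  have hb2 : ∑ _i ∈ N', (((S.card:ℚ)+1)/(ℓ:ℚ) - 1) ≤ ∑ i ∈ N',
      (if c ∈ A i then ((S.card : ℚ)+1)/(((A i ∩ S).card : ℚ)+1) - 1
       else if (A i ∩ S).card = 0 then 0 else -1) := by
    refine Finset.sum_le_sum fun i hi => ?_
    obtain ⟨hcA, hu⟩ := hprop i hi
    rw [if_pos hcA]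
    have h1 : ((A i ∩ S).card : ℚ) + 1 ≤ (ℓ:ℚ) := by exact_mod_cast hu
    have h2 : (0:ℚ) < ((A i ∩ S).card : ℚ) + 1 := by positivity
    have : ((S.card:ℚ)+1)/(ℓ:ℚ) ≤ ((S.card : ℚ)+1)/(((A i ∩ S).card : ℚ)+1) := by
      gcongr
    linarith
  rw [Finset.sum_const, nsmul_eq_mul, Finset.cast_card_sdiff hsub, Finset.card_univ] at hb1
  rw [Finset.sum_const, nsmul_eq_mul] at hb2
  linarith [hb1, hb2]

include hW hopt in
lemma opt_EJRplus (hk : 1 ≤ k) (hn : 1 ≤ Fintype.card V) : EJRplus A k W := by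
  rintro ⟨c, N', ℓ, hl, hcW, hsize, hprop⟩
  have hF := F_nonpos A hW hopt hcW
  have hlow := F_lower A W c N' ℓ hl hprop
  rw [hW] at hlow
  have hn' : (1:ℚ) ≤ (Fintype.card V : ℚ) := by exact_mod_cast hn
  have hk' : (1:ℚ) ≤ (k:ℚ) := by exact_mod_cast hk
  have hl' : (1:ℚ) ≤ (ℓ:ℚ) := by exact_mod_cast hl
  have h1 : (N'.card:ℚ) * (((k:ℚ)+1)/ℓ) ≤ (Fintype.card V : ℚ) := by linarith
  have h2 : ((ℓ:ℚ) * (Fintype.card V : ℚ) / k) * (((k:ℚ)+1)/ℓ)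
      ≤ (N'.card:ℚ) * (((k:ℚ)+1)/ℓ) :=
    mul_le_mul_of_nonneg_right hsize (by positivity)
  have h3 : ((ℓ:ℚ) * (Fintype.card V : ℚ) / k) * (((k:ℚ)+1)/ℓ)
      = (Fintype.card V : ℚ) * ((k:ℚ)+1) / k := by
    field_simp
  rw [h3] at h2
  have h4 : (Fintype.card V : ℚ) * ((k:ℚ)+1) / k ≤ (Fintype.card V : ℚ) := le_trans h2 h1
  rw [div_le_iff₀ (by linarith)] at h4
  nlinarith

include hW hopt in
lemma opt_extension (hk : 1 ≤ k) (hn : 1 ≤ Fintype.card V)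
    {cs : C} (hcsW : cs ∉ W) (hmax : ∀ d, d ∉ W → g A W d ≤ g A W cs) :
    EJRplus A (k+1) (insert cs W) := by
  rintro ⟨d, N', ℓ, hl, hdW', hsize, hprop⟩
  have hdW : d ∉ W := fun h => hdW' (Finset.mem_insert_of_mem h)
  have hdcs : d ≠ cs := fun h => hdW' (h ▸ Finset.mem_insert_self _ _)
  have hn' : (1:ℚ) ≤ (Fintype.card V : ℚ) := by exact_mod_cast hn
  have hk' : (1:ℚ) ≤ (k:ℚ) := by exact_mod_cast hk
  have hl' : (1:ℚ) ≤ (ℓ:ℚ) := by exact_mod_cast hl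
  have hlpos : (0:ℚ) < (ℓ:ℚ) := by linarith
  -- membership facts
  have hmemN : ∀ i ∈ N', d ∈ A i ∧ (A i ∩ W).card + 1 ≤ ℓ ∧
      (cs ∈ A i → (A i ∩ W).card + 2 ≤ ℓ) := by
    intro i hi
    obtain ⟨h1, h2⟩ := hprop i hi
    have hci := card_inter_insert (A i) W cs hcsW
    refine ⟨h1, ?_, ?_⟩
    · by_cases h : cs ∈ A i
      · rw [if_pos h] at hci; omega
      · rw [if_neg h] at hci; omega
    · intro h; rw [if_pos h] at hci; omega
  -- threshold : n ≤ (k+1) * (|N'|/ℓ)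
  have hthr : (Fintype.card V : ℚ) ≤ ((k:ℚ)+1) * ((N'.card : ℚ)/(ℓ:ℚ)) := by
    have h2 : ((ℓ:ℚ) * (Fintype.card V : ℚ) / ((k:ℚ)+1)) * (((k:ℚ)+1)/ℓ)
        ≤ (N'.card:ℚ) * (((k:ℚ)+1)/ℓ) := by
      apply mul_le_mul_of_nonneg_right _ (by positivity)
      exact_mod_cast hsize
    have h3 : ((ℓ:ℚ) * (Fintype.card V : ℚ) / ((k:ℚ)+1)) * (((k:ℚ)+1)/ℓ)
        = (Fintype.card V : ℚ) := by
      field_simp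
    rw [h3] at h2
    calc (Fintype.card V : ℚ) ≤ (N'.card:ℚ) * (((k:ℚ)+1)/ℓ) := h2
      _ = ((k:ℚ)+1) * ((N'.card : ℚ)/(ℓ:ℚ)) := by ring
  -- decomposition of F A W d
  set Q : ℚ := ∑ i ∈ N', (1/(((A i ∩ W).card:ℚ)+1) - 1/(ℓ:ℚ)) with hQdef
  set P : ℚ := ∑ i ∈ Finset.univ \ N',
      (if d ∈ A i then ((k:ℚ)+1)/(((A i ∩ W).card:ℚ)+1)
       else if (A i ∩ W).card = 0 then 1 else 0) with hPdef
  have hQterm : ∀ i ∈ N', (0:ℚ) ≤ 1/(((A i ∩ W).card:ℚ)+1) - 1/(ℓ:ℚ) := by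
    intro i hi
    have h1 : ((A i ∩ W).card : ℚ) + 1 ≤ (ℓ:ℚ) := by exact_mod_cast (hmemN i hi).2.1
    have h2 : (0:ℚ) < ((A i ∩ W).card : ℚ) + 1 := by positivity
    have : 1/(ℓ:ℚ) ≤ 1/(((A i ∩ W).card:ℚ)+1) := by gcongr
    linarith
  have hPterm : ∀ i ∈ Finset.univ \ N', (0:ℚ) ≤
      (if d ∈ A i then ((k:ℚ)+1)/(((A i ∩ W).card:ℚ)+1)
       else if (A i ∩ W).card = 0 then 1 else 0) := by
    intro i _
    by_cases h : d ∈ A i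
    · rw [if_pos h]; positivity
    · rw [if_neg h]
      by_cases h2 : (A i ∩ W).card = 0 <;> simp [h2]
  have hQ0 : 0 ≤ Q := Finset.sum_nonneg hQterm
  have hP0 : 0 ≤ P := Finset.sum_nonneg hPterm
  have hDQ : (N'.card : ℚ)/(ℓ:ℚ) + Q = ∑ i ∈ N', 1/(((A i ∩ W).card:ℚ)+1) := by
    rw [hQdef, Finset.sum_sub_distrib, Finset.sum_const, nsmul_eq_mul]
    ring
  have hFsplit : F A W d
      = ((k:ℚ)+1) * ((N'.card : ℚ)/(ℓ:ℚ) + Q) - (Fintype.card V : ℚ) + P := by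
    rw [hDQ, F, ← Finset.sum_sdiff (Finset.subset_univ N')]
    have hA : ∑ i ∈ N',
        (if d ∈ A i then ((W.card : ℚ)+1)/(((A i ∩ W).card : ℚ)+1) - 1
         else if (A i ∩ W).card = 0 then 0 else -1)
        = ((k:ℚ)+1) * (∑ i ∈ N', 1/(((A i ∩ W).card:ℚ)+1)) - (N'.card : ℚ) := by
      have hpt : ∀ i ∈ N',
          (if d ∈ A i then ((W.card : ℚ)+1)/(((A i ∩ W).card : ℚ)+1) - 1
           else if (A i ∩ W).card = 0 then 0 else -1)
          = ((k:ℚ)+1) * (1/(((A i ∩ W).card:ℚ)+1)) - 1 := by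
        intro i hi
        rw [if_pos ((hprop i hi).1), hW]
        ring
      rw [Finset.sum_congr rfl hpt, Finset.sum_sub_distrib, Finset.sum_const,
        nsmul_eq_mul, mul_one, Finset.mul_sum]
    have hB : ∑ i ∈ Finset.univ \ N',
        (if d ∈ A i then ((W.card : ℚ)+1)/(((A i ∩ W).card : ℚ)+1) - 1
         else if (A i ∩ W).card = 0 then 0 else -1)
        = -(((Finset.univ \ N').card : ℚ)) + P := by
      have hpt : ∀ i ∈ Finset.univ \ N',
          (if d ∈ A i then ((W.card : ℚ)+1)/(((A i ∩ W).card : ℚ)+1) - 1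
           else if (A i ∩ W).card = 0 then 0 else -1)
          = -1 + (if d ∈ A i then ((k:ℚ)+1)/(((A i ∩ W).card:ℚ)+1)
                  else if (A i ∩ W).card = 0 then 1 else 0) := by
        intro i _
        rw [hW]
        by_cases h : d ∈ A i
        · rw [if_pos h, if_pos h]; ring
        · rw [if_neg h, if_neg h]
          by_cases h2 : (A i ∩ W).card = 0 <;> simp [h2]
      rw [Finset.sum_congr rfl hpt, Finset.sum_add_distrib, Finset.sum_const, nsmul_eq_mul,
        hPdef]
      ring
    rw [hA, hB, Finset.cast_card_sdiff (Finset.subset_univ _), Finset.card_univ]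
    ring
  have hFd : F A W d ≤ 0 := F_nonpos A hW hopt hdW
  -- force equalities
  have hQP : ((k:ℚ)+1) * Q + P ≤ 0 := by nlinarith [hthr]
  have hQzero : Q = 0 := by nlinarith
  have hPzero : P = 0 := by nlinarith
  have hExact : ((k:ℚ)+1) * ((N'.card : ℚ)/(ℓ:ℚ)) = (Fintype.card V : ℚ) := by
    rw [hQzero, hPzero] at hFsplit
    simp at hFsplit
    nlinarith [hthr, hFd, hFsplit]
  -- pointwise consequences
  have hlne : (ℓ:ℚ) ≠ 0 := by positivity
  have hQpt : ∀ i ∈ N', (A i ∩ W).card + 1 = ℓ := by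
    intro i hi
    have h0 := (Finset.sum_eq_zero_iff_of_nonneg hQterm).1 hQzero i hi
    have h1 : 1/(((A i ∩ W).card:ℚ)+1) = 1/(ℓ:ℚ) := by linarith
    rw [div_eq_div_iff (by positivity) hlne] at h1
    have h2 : ((A i ∩ W).card:ℚ) + 1 = (ℓ:ℚ) := by linarith
    exact_mod_cast h2
  have hPpt : ∀ i, i ∉ N' → d ∉ A i ∧ (A i ∩ W).card ≠ 0 := by
    intro i hni
    have hmem : i ∈ Finset.univ \ N' := by simp [hni]
    have h0 := (Finset.sum_eq_zero_iff_of_nonneg hPterm).1 hPzero i hmem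
    by_cases h : d ∈ A i
    · rw [if_pos h] at h0
      exfalso
      have : (0:ℚ) < ((k:ℚ)+1)/(((A i ∩ W).card:ℚ)+1) := by positivity
      linarith
    · rw [if_neg h] at h0
      refine ⟨h, ?_⟩
      by_cases h2 : (A i ∩ W).card = 0
      · rw [if_pos h2] at h0
        norm_num at h0
      · exact h2
  have hN1 : ∀ i ∈ N', cs ∉ A i := by
    intro i hi hcsA
    have := (hmemN i hi).2.2 hcsA
    have := hQpt i hi
    omega
  have hfilter : Finset.univ.filter (fun i => d ∈ A i) = N' := by
    ext i
    simp only [Finset.mem_filter, Finset.mem_univ, true_and]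
    constructor
    · intro h
      by_contra hni
      exact (hPpt i hni).1 h
    · intro h
      exact (hprop i h).1
  have hgd : g A W d = (N'.card : ℚ)/(ℓ:ℚ) := by
    have h1 : g A W d = ∑ i ∈ N', 1/(((A i ∩ W).card : ℚ)+1) := by
      rw [g, ← hfilter, Finset.sum_filter]
    have h2 : ∑ i ∈ N', 1/(((A i ∩ W).card : ℚ)+1) = (N'.card : ℚ)/(ℓ:ℚ) + Q := by
      rw [hQdef, Finset.sum_sub_distrib, Finset.sum_const, nsmul_eq_mul]
      ring
    rw [h1, h2, hQzero, add_zero]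
  have hNne : N'.Nonempty := by
    rw [← Finset.card_pos]
    by_contra h
    have h0 : N'.card = 0 := by omega
    rw [h0] at hExact
    simp at hExact
    linarith
  have hgcs : g A W d ≤ g A W cs := hmax d hdW
  -- case split on ℓ
  rcases Nat.lt_or_ge ℓ 2 with hl2 | hl2
  · -- ℓ = 1
    have hl1 : ℓ = 1 := by omega
    subst hl1
    have hcfilter : Finset.univ.filter (fun i => cs ∈ A i ∨ (A i ∩ W).card ≠ 0)
        = Finset.univ \ N' := by
      ext i
      by_cases hi : i ∈ N'
      · have hzero : A i ∩ W = ∅ := Finset.card_eq_zero.1 (by have := hQpt i hi; omega)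
        simp [Finset.mem_filter, Finset.mem_sdiff, hi, hN1 i hi, hzero]
      · have h2 : A i ∩ W ≠ ∅ := fun he => (hPpt i hi).2 (by simp [he])
        simp [Finset.mem_filter, Finset.mem_sdiff, hi, h2]
    have hFcs := F_nonpos A hW hopt hcsW
    rw [F_eq_g, hW, hcfilter, Finset.cast_card_sdiff (Finset.subset_univ _),
      Finset.card_univ] at hFcs
    have hNpos : (0:ℚ) < (N'.card : ℚ) := by
      exact_mod_cast Finset.card_pos.2 hNne
    have : ((k:ℚ)+1) * g A W cs ≥ ((k:ℚ)+1) * g A W d := by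
      apply mul_le_mul_of_nonneg_left hgcs (by linarith)
    rw [hgd] at this
    simp only [Nat.cast_one, div_one] at this
    nlinarith [hExact]
  · -- ℓ ≥ 2
    have hl2' : (2:ℚ) ≤ (ℓ:ℚ) := by exact_mod_cast hl2
    have hall : ∀ i : V, (A i ∩ W).card ≠ 0 := by
      intro i
      by_cases hi : i ∈ N'
      · have := hQpt i hi; omega
      · exact (hPpt i hi).2
    have hcfilter : ∀ c : C, Finset.univ.filter (fun i => c ∈ A i ∨ (A i ∩ W).card ≠ 0)
        = (Finset.univ : Finset V) := by
      intro c
      ext i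
      have h2 : A i ∩ W ≠ ∅ := fun he => hall i (by simp [he])
      simp [h2]
    have hFcs := F_nonpos A hW hopt hcsW
    have hFcs_eq : F A W cs = ((k:ℚ)+1) * g A W cs - (Fintype.card V : ℚ) := by
      rw [F_eq_g, hW, hcfilter, Finset.card_univ]
    have hgcs_exact : g A W cs = (N'.card : ℚ)/(ℓ:ℚ) := by
      have h1 : ((k:ℚ)+1) * g A W cs ≤ (Fintype.card V : ℚ) := by
        rw [hFcs_eq] at hFcs; linarith
      have h2 : ((k:ℚ)+1) * g A W d ≤ ((k:ℚ)+1) * g A W cs :=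
        mul_le_mul_of_nonneg_left hgcs (by linarith)
      rw [hgd] at h2
      have h3 : ((k:ℚ)+1) * g A W cs = ((k:ℚ)+1) * ((N'.card : ℚ)/(ℓ:ℚ)) := by
        linarith [hExact]
      exact mul_left_cancel₀ (by linarith : ((k:ℚ)+1) ≠ 0) h3
    have hF0 : F A W cs = 0 := by
      rw [hFcs_eq, hgcs_exact, hExact]
      ring
    -- swap committee Y
    obtain ⟨i0, hi0⟩ := hNne
    have hu0 : 1 ≤ (A i0 ∩ W).card := by
      have := hQpt i0 hi0; omega
    obtain ⟨w0, hw0⟩ := Finset.card_pos.1 (by omega : 0 < (A i0 ∩ W).card)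
    have hw0A : w0 ∈ A i0 := (Finset.mem_inter.1 hw0).1
    have hw0W : w0 ∈ W := (Finset.mem_inter.1 hw0).2
    have hsw := F_eq_zero_swap A hW hopt hcsW hF0 w0 hw0W
    set Y := insert cs (W.erase w0) with hYdef
    have hYcard : Y.card = k := by
      rw [hYdef, swap_card hw0W hcsW, hW]
    have hoptY : ∀ S : Finset C, S.card = k → score A S ≤ score A Y := by
      intro S hS
      rw [hsw]
      exact hopt S hS
    have hdY : d ∉ Y := by
      rw [hYdef]
      simp only [Finset.mem_insert, Finset.mem_erase]
      push_neg
      exact ⟨hdcs, fun _ => hdW⟩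
    have hFYd : F A Y d ≤ 0 := F_nonpos A hYcard hoptY hdY
    -- lower bound F A Y d
    have hvcard : ∀ i ∈ N', ((A i ∩ Y).card : ℚ)
        = ((A i ∩ W).card : ℚ) - (if w0 ∈ A i then 1 else 0) := by
      intro i hi
      have hcs_ne : cs ∉ W.erase w0 := fun h => hcsW (Finset.mem_of_mem_erase h)
      rw [hYdef]
      have h1 := card_inter_insert (A i) (W.erase w0) cs hcs_ne
      rw [if_neg (hN1 i hi)] at h1
      rw [h1]
      push_cast
      rw [card_inter_erase (A i) W w0 hw0W]
      ring
    have hgYd : g A Y d = ∑ i ∈ N', 1/(((A i ∩ Y).card : ℚ)+1) := by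
      rw [g, ← hfilter, Finset.sum_filter]
    have hbound : (N'.card : ℚ)/(ℓ:ℚ) + (1/((ℓ:ℚ)-1) - 1/(ℓ:ℚ)) ≤ g A Y d := by
      have hterm0 : ((A i0 ∩ Y).card : ℚ) + 1 = (ℓ:ℚ) - 1 := by
        have hv := hvcard i0 hi0
        rw [if_pos hw0A] at hv
        have hu : ((A i0 ∩ W).card : ℚ) + 1 = (ℓ:ℚ) := by exact_mod_cast hQpt i0 hi0
        rw [hv]
        linarith
      have hrest : ∀ i ∈ N'.erase i0, 1/(ℓ:ℚ) ≤ 1/(((A i ∩ Y).card : ℚ)+1) := by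
        intro i hi'
        have hiN := Finset.mem_of_mem_erase hi'
        have hv := hvcard i hiN
        have hu : ((A i ∩ W).card : ℚ) + 1 = (ℓ:ℚ) := by exact_mod_cast hQpt i hiN
        have hle : ((A i ∩ Y).card : ℚ) + 1 ≤ (ℓ:ℚ) := by
          by_cases h : w0 ∈ A i
          · rw [hv, if_pos h]; linarith
          · rw [hv, if_neg h]; linarith
        have hpos : (0:ℚ) < ((A i ∩ Y).card : ℚ) + 1 := by
            have : (0:ℚ) ≤ ((A i ∩ Y).card : ℚ) := Nat.cast_nonneg _
            linarith
        exact one_div_le_one_div_of_le hpos hle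
      have h1 : ∑ _i ∈ N'.erase i0, (1/(ℓ:ℚ)) ≤ ∑ i ∈ N'.erase i0, 1/(((A i ∩ Y).card : ℚ)+1) :=
        Finset.sum_le_sum hrest
      rw [Finset.sum_const, nsmul_eq_mul, Finset.card_erase_of_mem hi0] at h1
      have hcN : ((N'.card - 1 : ℕ) : ℚ) = (N'.card : ℚ) - 1 := by
        have h2 : 1 ≤ N'.card := Finset.card_pos.2 ⟨i0, hi0⟩
        push_cast [Nat.cast_sub h2]
        ring
      rw [hcN] at h1
      have hsum := Finset.add_sum_erase N' (fun i => 1/(((A i ∩ Y).card : ℚ)+1)) hi0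
      rw [hgYd, ← hsum]
      have hl1pos : (0:ℚ) < (ℓ:ℚ) - 1 := by linarith
      calc (N'.card : ℚ)/(ℓ:ℚ) + (1/((ℓ:ℚ)-1) - 1/(ℓ:ℚ))
          = 1/((ℓ:ℚ)-1) + ((N'.card:ℚ) - 1) * (1/(ℓ:ℚ)) := by ring
        _ ≤ 1/((ℓ:ℚ)-1) + ∑ i ∈ N'.erase i0, 1/(((A i ∩ Y).card : ℚ)+1) := by linarith
        _ = 1/(((A i0 ∩ Y).card : ℚ)+1) + ∑ i ∈ N'.erase i0, 1/(((A i ∩ Y).card : ℚ)+1) := by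
            rw [hterm0]
    have hRY : ((Finset.univ.filter (fun i => d ∈ A i ∨ (A i ∩ Y).card ≠ 0)).card : ℚ)
        ≤ (Fintype.card V : ℚ) := by
      rw [← Finset.card_univ]
      exact_mod_cast Finset.card_le_card (Finset.filter_subset _ _)
    have hFYd_eq := F_eq_g A Y d
    rw [hYcard] at hFYd_eq
    have hfinal : (0:ℚ) < F A Y d := by
      have h1 : ((k:ℚ)+1) * g A Y d ≥ ((k:ℚ)+1) * ((N'.card : ℚ)/(ℓ:ℚ))
          + ((k:ℚ)+1) * (1/((ℓ:ℚ)-1) - 1/(ℓ:ℚ)) := by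
        nlinarith [hbound]
      have h2 : (0:ℚ) < 1/((ℓ:ℚ)-1) - 1/(ℓ:ℚ) := by
        rw [sub_pos]
        exact one_div_lt_one_div_of_lt (by linarith) (by linarith)
      have h3 : (0:ℚ) < ((k:ℚ)+1) * (1/((ℓ:ℚ)-1) - 1/(ℓ:ℚ)) :=
        mul_pos (by linarith) h2
      rw [hFYd_eq]
      linarith [h1, h3, hRY, hExact]
    linarith


end Opt

section Main

variable (A : V → Finset C) [Fintype C]

lemma exists_opt (k : ℕ) (hk : k ≤ Fintype.card C) :
    ∃ W : Finset C, W.card = k ∧ ∀ S : Finset C, S.card = k → score A S ≤ score A W := by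
  have hne : (Finset.powersetCard k (Finset.univ : Finset C)).Nonempty :=
    Finset.powersetCard_nonempty.2 (by simpa using hk)
  obtain ⟨W, hWmem, hWmax⟩ := Finset.exists_max_image _ (score A) hne
  refine ⟨W, (Finset.mem_powersetCard.1 hWmem).2, fun S hS => ?_⟩
  exact hWmax S (Finset.mem_powersetCard.2 ⟨Finset.subset_univ _, hS⟩)

end Main

end EJRaux


/-- for every approval instance and committee size `k < |C|` there
are a committee `W` of size `k` and a candidate `c ∉ W` such that `W` satisfies
EJR+ w.r.t. size `k` and `W ∪ {c}` satisfies EJR+ w.r.t. size `k + 1`. -/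
theorem ejrplus_committee_monotone {V C : Type*} [Fintype V] [Fintype C]
    [DecidableEq V] [DecidableEq C]
    (A : V → Finset C) (k : ℕ)
    (hn : 1 ≤ Fintype.card V) (hk1 : 1 ≤ k) (hk2 : k < Fintype.card C) :
    ∃ (W : Finset C) (c : C), W.card = k ∧ c ∉ W ∧
      EJRplus A k W ∧ EJRplus A (k + 1) (insert c W) := by
  obtain ⟨W, hWcard, hopt⟩ := EJRaux.exists_opt A k (le_of_lt hk2)
  have hne : ((Finset.univ : Finset C) \ W).Nonempty := by
    rw [← Finset.card_pos, Finset.card_sdiff_of_subset (Finset.subset_univ _), Finset.card_univ]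
    omega
  obtain ⟨cs, hcs_mem, hcs_max⟩ := Finset.exists_max_image _ (EJRaux.g A W) hne
  have hcsW : cs ∉ W := (Finset.mem_sdiff.1 hcs_mem).2
  have hmax : ∀ d, d ∉ W → EJRaux.g A W d ≤ EJRaux.g A W cs := by
    intro d hd
    exact hcs_max d (Finset.mem_sdiff.2 ⟨Finset.mem_univ _, hd⟩)
  exact ⟨W, cs, hWcard, hcsW,
    EJRaux.opt_EJRplus A hWcard hopt hk1 hn,
    EJRaux.opt_extension A hWcard hopt hk1 hn hcsW hmax⟩
end

section
/- Consider the instance with strict preferences over 4 voters, candidates C = {c1,...,c6}, and committee size k = 2, in which voter 1 ranks c1 ≻ c2 ≻ c3 ≻ c4 ≻ c5 ≻ c6, voter 2 ranks c5 ≻ c2 ≻ c3 ≻ c4 ≻ c6 ≻ c1, voter 3 ranks c4 ≻ c3 ≻ c2 ≻ c6 ≻ c1 ≻ c5, and voter 4 ranks c6 ≻ c3 ≻ c2 ≻ c5 ≻ c1 ≻ c4. Then the committee W = {c4, c6} satisfies IPSC but does not satisfy rank-PJR+. -/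
/-- `N'` forms a generalized solid coalition over `C'`. -/
def SolidCoalition {V C : Type*} (rank : V → C → ℕ∞)
    (N' : Finset V) (C' : Finset C) : Prop :=
  ∀ i ∈ N', ∀ c' ∈ C', ∀ c : C, c ∉ C' → rank i c' ≤ rank i c

/-- The upper contour set `C̄'(N')`. -/
def upperContour {V C : Type*} [Fintype C] [DecidableEq C] (rank : V → C → ℕ∞)
    (N' : Finset V) (C' : Finset C) : Finset C :=
  Finset.univ.filter fun c => ∃ i ∈ N', ∃ c' ∈ C', rank i c ≤ rank i c'

/-- A committee `W` satisfies IPSC. -/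
def IPSC {V C : Type*} [Fintype V] [Fintype C] [DecidableEq C]
    (rank : V → C → ℕ∞) (k : ℕ) (W : Finset C) : Prop :=
  ∀ ℓ : ℕ, 1 ≤ ℓ → ∀ (N' : Finset V) (C' : Finset C),
    SolidCoalition rank N' C' → (ℓ : ℚ) * (Fintype.card V) / k ≤ N'.card →
    C' ⊆ W ∨ ℓ ≤ (upperContour rank N' C' ∩ W).card

/-- A committee `W` satisfies rank-PJR+. -/
def RankPJRplus {V C : Type*} [Fintype V] [Fintype C] [DecidableEq V] [DecidableEq C]
    (rank : V → C → ℕ∞) (k : ℕ) (W : Finset C) : Prop :=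
  ¬ ∃ (c : C) (r ℓ : ℕ) (N' : Finset V), c ∉ W ∧
      1 ≤ r ∧ r ≤ Fintype.card C ∧ 1 ≤ ℓ ∧
      (ℓ : ℚ) * (Fintype.card V) / k ≤ N'.card ∧
      (∀ i ∈ N', rank i c ≤ (r : ℕ∞)) ∧
      ((N'.biUnion fun i => Finset.univ.filter fun c' : C => rank i c' ≤ (r : ℕ∞))
          ∩ W).card < ℓ

private def rkN : Fin 4 → Fin 6 → ℕ :=
  ![![1, 2, 3, 4, 5, 6],
    ![6, 2, 3, 4, 1, 5],
    ![5, 3, 2, 1, 6, 4],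
    ![5, 3, 2, 6, 4, 1]]

private lemma key : ∀ (i j : Fin 4), i ≠ j → ∀ C' : Finset (Fin 6),
    (∀ c' ∈ C', ∀ c : Fin 6, c ∉ C' → rkN i c' ≤ rkN i c) →
    (∀ c' ∈ C', ∀ c : Fin 6, c ∉ C' → rkN j c' ≤ rkN j c) →
    C' = ∅ ∨ C' = Finset.univ := by decide

/-- in the 4-voter, 6-candidate instance with strict rankings
`c1 ≻ c2 ≻ c3 ≻ c4 ≻ c5 ≻ c6`, `c5 ≻ c2 ≻ c3 ≻ c4 ≻ c6 ≻ c1`,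
`c4 ≻ c3 ≻ c2 ≻ c6 ≻ c1 ≻ c5`, `c6 ≻ c3 ≻ c2 ≻ c5 ≻ c1 ≻ c4` and `k = 2`,
the committee `W = {c4, c6}` satisfies IPSC but not rank-PJR+.
(Candidate `cⱼ` is encoded as `j - 1 : Fin 6`.) -/
theorem ipsc_not_rankpjrplus_example :
    let rank : Fin 4 → Fin 6 → ℕ∞ := fun i c =>
      ((![![1, 2, 3, 4, 5, 6],
          ![6, 2, 3, 4, 1, 5],
          ![5, 3, 2, 1, 6, 4],
          ![5, 3, 2, 6, 4, 1]] : Fin 4 → Fin 6 → ℕ) i c : ℕ∞)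
    let W : Finset (Fin 6) := {3, 5}
    IPSC rank 2 W ∧ ¬ RankPJRplus rank 2 W := by
  intro rank W
  constructor
  · intro l hl N' C' hsc hq
    have hcard : N'.card ≤ 4 := le_trans (Finset.card_le_univ _) (by decide)
    have hq' : 2 * l ≤ N'.card := by
      simp only [Fintype.card_fin] at hq
      push_cast at hq
      have h2 : ((2 * l : ℕ) : ℚ) ≤ (N'.card : ℚ) := by push_cast; linarith
      exact_mod_cast h2
    have h2card : 1 < N'.card := by omega
    obtain ⟨i, hi, j, hj, hij⟩ := Finset.one_lt_card.mp h2card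
    have hsci : ∀ c' ∈ C', ∀ c : Fin 6, c ∉ C' → rkN i c' ≤ rkN i c := by
      intro c' hc' c hc
      have := hsc i hi c' hc' c hc
      exact Nat.cast_le.mp this
    have hscj : ∀ c' ∈ C', ∀ c : Fin 6, c ∉ C' → rkN j c' ≤ rkN j c := by
      intro c' hc' c hc
      have := hsc j hj c' hc' c hc
      exact Nat.cast_le.mp this
    rcases key i j hij C' hsci hscj with h | h
    · left; rw [h]; exact Finset.empty_subset _
    · right
      have hW : upperContour rank N' C' ∩ W = W := by
        apply Finset.inter_eq_right.mpr
        intro w _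
        simp only [upperContour, Finset.mem_filter, Finset.mem_univ, true_and]
        exact ⟨i, hi, w, by rw [h]; exact Finset.mem_univ w, le_refl _⟩
      rw [hW]
      have : W.card = 2 := by decide
      omega
  · simp only [RankPJRplus, not_not]
    refine ⟨1, 2, 1, {0, 1}, ?_, ?_, ?_, ?_, ?_, ?_, ?_⟩
    · decide
    · norm_num
    · decide
    · norm_num
    · norm_num [Finset.card_insert_of_notMem]
    · decide
    · decide
end

section
/- For every instance with weak preferences, every feasible committee that is rank-priceable with a price system whose budget B satisfies B > k also satisfies rank-PJR+. -/
open Finset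

/-- The rank functions are consistent with the acceptable sets. -/
def ValidRanks {V C : Type*} [Fintype C] [DecidableEq C]
    (A : V → Finset C) (rank : V → C → ℕ∞) : Prop :=
  (∀ i c, rank i c = ⊤ ↔ c ∉ A i) ∧
  (∀ i, ∀ c ∈ A i, rank i c =
    ((Finset.univ.filter fun c' : C => rank i c' < rank i c).card : ℕ∞) + 1)

/-- A rank price system for `W` with budget `B`: payment functions
`p i : C → [0, B/n]` satisfying (C1)–(C4) and (C5_rank). -/
def RankPriceSystem {V C : Type*} [Fintype V] [Fintype C] [DecidableEq V] [DecidableEq C]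
    (A : V → Finset C) (rank : V → C → ℕ∞) (W : Finset C)
    (B : ℝ) (p : V → C → ℝ) : Prop :=
  (∀ i c, 0 ≤ p i c ∧ p i c ≤ B / (Fintype.card V)) ∧
  -- (C1)
  (∀ i c, c ∉ A i → p i c = 0) ∧
  -- (C2)
  (∀ i : V, ∑ c : C, p i c ≤ B / (Fintype.card V)) ∧
  -- (C3)
  (∀ c ∈ W, ∑ i : V, p i c = 1) ∧
  -- (C4)
  (∀ c ∉ W, ∑ i : V, p i c = 0) ∧
  -- (C5_rank)
  (∀ c ∉ W, ∀ r : ℕ, 1 ≤ r → r ≤ Fintype.card C →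
    (∑ i ∈ Finset.univ.filter (fun i : V => rank i c ≤ (r : ℕ∞)),
        (B / (Fintype.card V) - ∑ c' : C, p i c')) +
    (∑ i ∈ Finset.univ.filter (fun i : V => rank i c ≤ (r : ℕ∞)),
        ∑ c' ∈ Finset.univ.filter (fun c' : C => ¬ rank i c' ≤ (r : ℕ∞)), p i c') ≤ 1)

/-- every feasible committee that is rank-priceable with a price
system whose budget `B` satisfies `B > k` also satisfies rank-PJR+. -/
theorem rank_priceable_implies_rankpjrplus {V C : Type*} [Fintype V] [Fintype C]
    [DecidableEq V] [DecidableEq C]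
    (A : V → Finset C) (rank : V → C → ℕ∞) (k : ℕ) (W : Finset C)
    (hvalid : ValidRanks A rank)
    (hn : 1 ≤ Fintype.card V) (hk1 : 1 ≤ k) (hk2 : k ≤ Fintype.card C)
    (hW : W.card ≤ k)
    (B : ℝ) (hB0 : 0 < B) (hBk : (k : ℝ) < B)
    (p : V → C → ℝ) (hp : RankPriceSystem A rank W B p) :
    RankPJRplus rank k W := by
  obtain ⟨hrange, hC1, hC2, hC3, hC4, hC5⟩ := hp
  rintro ⟨c, r, ℓ, N', hcW, hr1, hr2, hℓ1, hNcard, hNrank, hTW⟩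
  set n := Fintype.card V with hn_def
  have hn0 : (0:ℝ) < n := by exact_mod_cast hn
  have hk0 : (0:ℝ) < k := by exact_mod_cast hk1
  have h5 := hC5 c hcW r hr1 hr2
  set Nr := Finset.univ.filter (fun i : V => rank i c ≤ (r:ℕ∞)) with hNr_def
  have hsub : N' ⊆ Nr := fun i hi => Finset.mem_filter.mpr ⟨Finset.mem_univ i, hNrank i hi⟩
  set T := (N'.biUnion fun i => Finset.univ.filter fun c' : C => rank i c' ≤ (r : ℕ∞)) with hT_def
  -- inside spending of voter i
  set ins := fun i : V => ∑ c' ∈ Finset.univ.filter (fun c' : C => rank i c' ≤ (r:ℕ∞)), p i c' with hins_def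
  have hsplit : ∀ i : V, ∑ c' : C, p i c' =
      ins i + ∑ c' ∈ Finset.univ.filter (fun c' : C => ¬ rank i c' ≤ (r:ℕ∞)), p i c' :=
    fun i => (Finset.sum_filter_add_sum_filter_not _ _ _).symm
  -- rewrite C5 as a single sum
  have h5' : ∑ i ∈ Nr, (B / n - ins i) ≤ 1 := by
    rw [← Finset.sum_add_distrib] at h5
    calc ∑ i ∈ Nr, (B / n - ins i)
        = ∑ i ∈ Nr, ((B / n - ∑ c' : C, p i c') +
            ∑ c' ∈ Finset.univ.filter (fun c' : C => ¬ rank i c' ≤ (r:ℕ∞)), p i c') := by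
          refine Finset.sum_congr rfl fun i _ => ?_
          rw [hsplit i]; ring
      _ ≤ 1 := h5
  have hins_nonneg : ∀ i : V, 0 ≤ ins i :=
    fun i => Finset.sum_nonneg fun c' _ => (hrange i c').1
  have hins_le : ∀ i : V, ins i ≤ B / n := fun i =>
    le_trans (Finset.sum_le_sum_of_subset_of_nonneg (Finset.filter_subset _ _)
      (fun c' _ _ => (hrange i c').1)) (hC2 i)
  -- restrict to N'
  have hN' : ∑ i ∈ N', (B / n - ins i) ≤ 1 := by
    refine le_trans (Finset.sum_le_sum_of_subset_of_nonneg hsub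
      (fun i _ _ => by linarith [hins_le i])) h5'
  -- p i c' = 0 for c' not in W
  have hzero : ∀ (i : V) (c' : C), c' ∉ W → p i c' = 0 := by
    intro i c' hc'
    have h0 := hC4 c' hc'
    have := (Finset.sum_eq_zero_iff_of_nonneg (fun j _ => (hrange j c').1)).1 h0 i
      (Finset.mem_univ i)
    exact this
  -- bound total inside spending of N'
  have hins_bound : ∀ i ∈ N', ins i ≤ ∑ c' ∈ T ∩ W, p i c' := by
    intro i hi
    have : ins i = ∑ c' ∈ (Finset.univ.filter (fun c' : C => rank i c' ≤ (r:ℕ∞))) ∩ W,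
        p i c' := by
      rw [hins_def]
      refine (Finset.sum_subset (Finset.inter_subset_left) ?_).symm
      intro c' hc' hc''
      refine hzero i c' fun hw => hc'' (Finset.mem_inter.mpr ⟨hc', hw⟩)
    rw [this]
    refine Finset.sum_le_sum_of_subset_of_nonneg ?_ (fun c' _ _ => (hrange i c').1)
    intro c' hc'
    obtain ⟨h1, h2⟩ := Finset.mem_inter.mp hc'
    exact Finset.mem_inter.mpr ⟨Finset.mem_biUnion.mpr ⟨i, hi, h1⟩, h2⟩
  have hsum_ins : ∑ i ∈ N', ins i ≤ ((T ∩ W).card : ℝ) := by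
    calc ∑ i ∈ N', ins i ≤ ∑ i ∈ N', ∑ c' ∈ T ∩ W, p i c' :=
          Finset.sum_le_sum hins_bound
      _ = ∑ c' ∈ T ∩ W, ∑ i ∈ N', p i c' := Finset.sum_comm
      _ ≤ ∑ c' ∈ T ∩ W, ∑ i : V, p i c' := by
          refine Finset.sum_le_sum fun c' _ => ?_
          exact Finset.sum_le_sum_of_subset_of_nonneg (Finset.subset_univ _)
            (fun j _ _ => (hrange j c').1)
      _ ≤ ∑ c' ∈ T ∩ W, 1 := by
          refine Finset.sum_le_sum fun c' hc' => ?_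
          exact le_of_eq (hC3 c' (Finset.mem_inter.mp hc').2)
      _ = ((T ∩ W).card : ℝ) := by simp
  have hTWr : ((T ∩ W).card : ℝ) ≤ (ℓ : ℝ) - 1 := by
    have : (T ∩ W).card + 1 ≤ ℓ := hTW
    have := (Nat.cast_le (α := ℝ)).2 this
    push_cast at this; linarith
  -- lower bound on card N'
  have hcard : ((ℓ : ℝ) * n / k) ≤ (N'.card : ℝ) := by
    have := hNcard
    have h := (Rat.cast_le (K := ℝ)).2 this
    push_cast at h
    exact h
  have hBn : (N'.card : ℝ) * (B / n) ≥ (ℓ : ℝ) * B / k := by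
    rw [ge_iff_le, div_le_iff₀ hk0]
    rw [div_le_iff₀ hk0] at hcard
    have hBn0 : 0 < B / n := div_pos hB0 hn0
    calc (ℓ : ℝ) * B = ((ℓ : ℝ) * n / k) * (B / n) * k := by
          field_simp
      _ ≤ (N'.card : ℝ) * (B / n) * k := by
          have : ((ℓ : ℝ) * n / k) * (B / n) ≤ (N'.card : ℝ) * (B / n) := by
            exact mul_le_mul_of_nonneg_right (by rw [div_le_iff₀ hk0] at *; linarith) hBn0.le
          exact mul_le_mul_of_nonneg_right this hk0.le
  have hsumBn : ∑ i ∈ N', (B / n - ins i) = (N'.card : ℝ) * (B / n) - ∑ i ∈ N', ins i := by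
    rw [Finset.sum_sub_distrib, Finset.sum_const, nsmul_eq_mul]
  have hℓr : (1 : ℝ) ≤ (ℓ : ℝ) := by exact_mod_cast hℓ1
  have hfinal : (1 : ℝ) < (ℓ : ℝ) * B / k - ((ℓ : ℝ) - 1) := by
    have h1 : (ℓ : ℝ) * k < (ℓ : ℝ) * B :=
      mul_lt_mul_of_pos_left hBk (by linarith)
    have h2 : (ℓ : ℝ) < (ℓ : ℝ) * B / k := by
      rw [lt_div_iff₀ hk0]; nlinarith
    linarith
  rw [hsumBn] at hN'
  linarith [hsum_ins, hTWr, hBn]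
end

section
/- For every instance with weak preferences, there exists a feasible committee W (|W| ≤ k) that is rank-priceable with some budget B > k; consequently, a committee satisfying rank-PJR+ always exists. -/
open Finset

section Aux
set_option linter.unusedSectionVars false
variable {V C : Type*} [Fintype V] [Fintype C] [DecidableEq V] [DecidableEq C]

lemma sum_point_update {f g : C → ℝ} {c0 : C}
    (hfg : ∀ x, x ≠ c0 → g x = f x) (hf : f c0 = 0) (s : Finset C) :
    ∑ x ∈ s, g x = (∑ x ∈ s, f x) + (if c0 ∈ s then g c0 else 0) := by
  by_cases hc : c0 ∈ s
  · rw [if_pos hc, ← Finset.sum_erase_add s g hc, ← Finset.sum_erase_add s f hc, hf, add_zero]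
    congr 1
    exact Finset.sum_congr rfl fun x hx => hfg x (Finset.ne_of_mem_erase hx)
  · rw [if_neg hc, add_zero]
    exact Finset.sum_congr rfl fun x hx => hfg x (fun h => hc (h ▸ hx))

/-- Invariant of the pricing process after processing ranks `< r`. -/
def PInv (A : V → Finset C) (rank : V → C → ℕ∞) (B : ℝ) (r : ℕ)
    (W : Finset C) (p : V → C → ℝ) : Prop :=
  (∀ i c, 0 ≤ p i c) ∧
  (∀ i c, p i c ≠ 0 → rank i c ≤ (r : ℕ∞)) ∧
  (∀ i c, c ∉ A i → p i c = 0) ∧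
  (∀ i : V, ∑ c : C, p i c ≤ B / (Fintype.card V)) ∧
  (∀ c ∈ W, ∑ i : V, p i c = 1) ∧
  (∀ c ∉ W, ∀ i, p i c = 0) ∧
  (∀ r' : ℕ, r' < r → ∀ c ∉ W,
    (∑ i ∈ Finset.univ.filter (fun i : V => rank i c ≤ (r' : ℕ∞)),
        (B / (Fintype.card V) - ∑ c' : C, p i c')) +
    (∑ i ∈ Finset.univ.filter (fun i : V => rank i c ≤ (r' : ℕ∞)),
        ∑ c' ∈ Finset.univ.filter (fun c' : C => ¬ rank i c' ≤ (r' : ℕ∞)), p i c') ≤ 1)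

lemma inner_step (A : V → Finset C) (rank : V → C → ℕ∞)
    (hvalid : ValidRanks A rank) (B : ℝ) (r : ℕ) :
    ∀ m : ℕ, ∀ W : Finset C, ∀ p : V → C → ℝ, PInv A rank B r W p →
      Wᶜ.card ≤ m →
      ∃ W' p', PInv A rank B r W' p' ∧
        ∀ c ∉ W', (∑ i ∈ Finset.univ.filter (fun i : V => rank i c ≤ (r : ℕ∞)),
          (B / (Fintype.card V) - ∑ c' : C, p' i c')) ≤ 1 := by
  intro m
  induction m with
  | zero =>
    intro W p hp hcard
    refine ⟨W, p, hp, fun c hc => absurd ?_ (Finset.notMem_empty c)⟩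
    rw [← Finset.card_eq_zero.mp (Nat.le_zero.mp hcard)]
    exact Finset.mem_compl.mpr hc
  | succ m ih =>
    intro W p hp hcard
    obtain ⟨hnn, hrk, hA, hbud, hin, hout, hg⟩ := hp
    by_cases hex : ∃ c ∉ W, 1 <
        ∑ i ∈ Finset.univ.filter (fun i : V => rank i c ≤ (r : ℕ∞)),
          (B / (Fintype.card V) - ∑ c' : C, p i c')
    · obtain ⟨c0, hc0W, hL⟩ := hex
      set n : ℝ := (Fintype.card V : ℝ) with hn
      set lo : V → ℝ := fun i => B / n - ∑ c' : C, p i c' with hlo_def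
      set L : ℝ := ∑ i ∈ Finset.univ.filter (fun i : V => rank i c0 ≤ (r : ℕ∞)), lo i with hLdef
      have hL1 : 1 < L := hL
      have hLpos : 0 < L := lt_trans one_pos hL1
      have hlo_nn : ∀ i, 0 ≤ lo i := fun i => sub_nonneg.mpr (hbud i)
      set p' : V → C → ℝ := fun i c =>
        if c = c0 ∧ rank i c0 ≤ (r : ℕ∞) then lo i / L else p i c with hp'def
      have hpc0 : ∀ i, p i c0 = 0 := fun i => hout c0 hc0W i
      have hagree : ∀ i, ∀ x, x ≠ c0 → p' i x = p i x := by
        intro i x hx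
        simp only [hp'def]
        rw [if_neg (fun h => hx h.1)]
      have hd_nn : ∀ i, 0 ≤ p' i c0 := by
        intro i
        simp only [hp'def]
        split
        · exact div_nonneg (hlo_nn i) (le_of_lt hLpos)
        · exact hnn i c0
      have hd_le : ∀ i, p' i c0 ≤ lo i := by
        intro i
        simp only [hp'def]
        split
        · exact div_le_self (hlo_nn i) (le_of_lt hL1)
        · rw [hpc0 i]; exact hlo_nn i
      -- summation identity
      have hsum : ∀ i, ∀ s : Finset C,
          ∑ x ∈ s, p' i x = (∑ x ∈ s, p i x) + (if c0 ∈ s then p' i c0 else 0) :=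
        fun i s => sum_point_update (hagree i) (hpc0 i) s
      have hsumU : ∀ i, ∑ x : C, p' i x = (∑ x : C, p i x) + p' i c0 := by
        intro i; rw [hsum i Finset.univ, if_pos (Finset.mem_univ c0)]
      have hp' : PInv A rank B r (insert c0 W) p' := by
        refine ⟨?_, ?_, ?_, ?_, ?_, ?_, ?_⟩
        · intro i c
          simp only [hp'def]
          split
          · exact div_nonneg (hlo_nn i) (le_of_lt hLpos)
          · exact hnn i c
        · intro i c hne
          by_cases hc : c = c0 ∧ rank i c0 ≤ (r : ℕ∞)
          · rw [hc.1]; exact hc.2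
          · apply hrk i c
            rwa [show p' i c = p i c from if_neg hc] at hne
        · intro i c hcA
          simp only [hp'def]
          split
          · rename_i h
            exfalso
            have ht : rank i c0 = ⊤ := (hvalid.1 i c0).mpr (h.1 ▸ hcA)
            rw [ht] at h
            exact (WithTop.natCast_ne_top r) (top_le_iff.mp h.2)
          · exact hA i c hcA
        · intro i
          rw [hsumU i]
          have := hd_le i
          simp only [hlo_def] at this
          linarith [hbud i, this]
        · intro c hc
          rcases Finset.mem_insert.mp hc with h | h
          · rw [h]
            have key : ∀ i : V, p' i c0 = if rank i c0 ≤ (r : ℕ∞) then lo i / L else 0 := by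
              intro i
              by_cases hr : rank i c0 ≤ (r : ℕ∞)
              · rw [if_pos hr]
                exact if_pos ⟨rfl, hr⟩
              · rw [if_neg hr, show p' i c0 = p i c0 from if_neg (fun hh => hr hh.2)]
                exact hpc0 i
            rw [Finset.sum_congr rfl (fun i _ => key i), ← Finset.sum_filter,
              ← Finset.sum_div, ← hLdef, div_self (ne_of_gt hLpos)]
          · have hne : c ≠ c0 := fun he => hc0W (he ▸ h)
            rw [Finset.sum_congr rfl (fun i _ => hagree i c hne)]
            exact hin c h
        · intro c hc i
          have hne : c ≠ c0 := fun h => hc (h ▸ Finset.mem_insert_self c0 W)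
          rw [hagree i c hne]
          exact hout c (fun h => hc (Finset.mem_insert_of_mem h)) i
        · intro r' hr' c hc
          have hcW : c ∉ W := fun h => hc (Finset.mem_insert_of_mem h)
          refine le_trans ?_ (hg r' hr' c hcW)
          rw [← Finset.sum_add_distrib, ← Finset.sum_add_distrib]
          apply Finset.sum_le_sum
          intro i _
          rw [hsumU i, hsum i]
          have h2 : (if c0 ∈ Finset.univ.filter (fun c' : C => ¬ rank i c' ≤ (r' : ℕ∞)) then p' i c0 else 0) ≤ p' i c0 := by
            split
            · exact le_refl _
            · exact hd_nn i
          linarith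
      have hcard' : (insert c0 W)ᶜ.card ≤ m := by
        rw [Finset.compl_insert, Finset.card_erase_of_mem (Finset.mem_compl.mpr hc0W)]
        omega
      exact ih (insert c0 W) p' hp' hcard'
    · push_neg at hex
      exact ⟨W, p, ⟨hnn, hrk, hA, hbud, hin, hout, hg⟩, hex⟩

lemma outer_step (A : V → Finset C) (rank : V → C → ℕ∞) (hvalid : ValidRanks A rank)
    (B : ℝ) (hB : 0 ≤ B / (Fintype.card V)) :
    ∀ r : ℕ, ∃ W p, PInv A rank B r W p := by
  intro r
  induction r with
  | zero =>
    refine ⟨∅, fun _ _ => 0, fun _ _ => le_refl 0, fun i c h => absurd rfl h,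
      fun _ _ _ => rfl, ?_, ?_, fun _ _ _ => rfl, ?_⟩
    · intro i; simpa using hB
    · intro c hc; exact absurd hc (Finset.notMem_empty c)
    · intro r' hr'; exact absurd hr' (Nat.not_lt_zero r')
  | succ r ihr =>
    obtain ⟨W, p, hp⟩ := ihr
    obtain ⟨W', p', hp', hterm⟩ := inner_step A rank hvalid B r Wᶜ.card W p hp le_rfl
    obtain ⟨hnn, hrk, hA, hbud, hin, hout, hg⟩ := hp'
    refine ⟨W', p', hnn, ?_, hA, hbud, hin, hout, ?_⟩
    · intro i c h
      refine le_trans (hrk i c h) ?_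
      exact_mod_cast Nat.cast_le.mpr (Nat.le_succ r)
    · intro r' hr' c hc
      rcases Nat.lt_succ_iff_lt_or_eq.mp hr' with h | h
      · exact hg r' h c hc
      · subst h
        have hzero : (∑ i ∈ Finset.univ.filter (fun i : V => rank i c ≤ (r' : ℕ∞)),
            ∑ c' ∈ Finset.univ.filter (fun c' : C => ¬ rank i c' ≤ (r' : ℕ∞)), p' i c') = 0 := by
          apply Finset.sum_eq_zero; intro i _
          apply Finset.sum_eq_zero; intro c' hc'
          by_contra hne
          exact (Finset.mem_filter.mp hc').2 (hrk i c' hne)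
        rw [hzero, add_zero]
        exact hterm c hc

end Aux

/-- for every instance with weak preferences there exists a
feasible committee that is rank-priceable with some budget `B > k`, and hence a
committee satisfying rank-PJR+ always exists. -/
theorem exists_rank_priceable_committee {V C : Type*} [Fintype V] [Fintype C]
    [DecidableEq V] [DecidableEq C]
    (A : V → Finset C) (rank : V → C → ℕ∞)
    (hvalid : ValidRanks A rank) (k : ℕ)
    (hn : 1 ≤ Fintype.card V) (hk1 : 1 ≤ k) (hk2 : k ≤ Fintype.card C) :
    ∃ W : Finset C, W.card ≤ k ∧
      (∃ (B : ℝ) (p : V → C → ℝ), (k : ℝ) < B ∧ RankPriceSystem A rank W B p) ∧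
      RankPJRplus rank k W := by
  classical
  set n : ℝ := (Fintype.card V : ℝ) with hndef
  have hn0 : (0:ℝ) < n := by rw [hndef]; exact_mod_cast Nat.lt_of_lt_of_le Nat.zero_lt_one hn
  have hk0 : (0:ℝ) < (k:ℝ) := by exact_mod_cast Nat.lt_of_lt_of_le Nat.zero_lt_one hk1
  set B : ℝ := (k:ℝ) + 1/2 with hBdef
  have hB0 : (0:ℝ) < B := by positivity
  have hBn : (0:ℝ) ≤ B / n := le_of_lt (div_pos hB0 hn0)
  obtain ⟨W, p, hp⟩ := outer_step A rank hvalid B hBn (Fintype.card C + 1)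
  obtain ⟨hnn, hrk, hA, hbud, hin, hout, hg⟩ := hp
  -- committee size
  have hWcard : W.card ≤ k := by
    have e2 : ∀ i : V, ∑ c ∈ W, p i c = ∑ c : C, p i c := by
      intro i
      exact Finset.sum_subset (Finset.subset_univ W) (fun c _ hcW => hout c hcW i)
    have h1 : (W.card : ℝ) ≤ B := by
      calc (W.card : ℝ) = ∑ c ∈ W, (1:ℝ) := by rw [Finset.sum_const, nsmul_eq_mul, mul_one]
        _ = ∑ c ∈ W, ∑ i : V, p i c := Finset.sum_congr rfl (fun c hc => (hin c hc).symm)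
        _ = ∑ i : V, ∑ c ∈ W, p i c := Finset.sum_comm
        _ = ∑ i : V, ∑ c : C, p i c := Finset.sum_congr rfl (fun i _ => e2 i)
        _ ≤ ∑ i : V, B / n := Finset.sum_le_sum (fun i _ => hbud i)
        _ = n * (B / n) := by rw [Finset.sum_const, Finset.card_univ, nsmul_eq_mul]
        _ = B := by field_simp
    have h2 : (W.card : ℝ) < ((k + 1 : ℕ) : ℝ) := by push_cast; rw [hBdef] at h1; linarith
    exact Nat.lt_succ_iff.mp (by exact_mod_cast h2)
  -- price system
  have hps : RankPriceSystem A rank W B p := by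
    refine ⟨?_, hA, hbud, hin, ?_, ?_⟩
    · intro i c
      exact ⟨hnn i c, le_trans
        (Finset.single_le_sum (fun c' _ => hnn i c') (Finset.mem_univ c)) (hbud i)⟩
    · intro c hc
      exact Finset.sum_eq_zero (fun i _ => hout c hc i)
    · intro c hc r hr1 hr2
      exact hg r (by omega) c hc
  -- PJR+
  have hpjr : RankPJRplus rank k W := by
    rintro ⟨c, r, ℓ, N', hcW, hr1, hr2, hl1, hsize, hrank, hcover⟩
    set G : V → Finset C := fun i => Finset.univ.filter (fun c' : C => rank i c' ≤ (r : ℕ∞))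
      with hGdef
    set S : Finset C := (N'.biUnion fun i => G i) ∩ W with hSdef
    have hl0 : (1:ℝ) ≤ (ℓ:ℝ) := by exact_mod_cast hl1
    -- C5 at (c, r)
    have hC5 := hg r (by omega) c hcW
    have hsub : N' ⊆ Finset.univ.filter (fun i : V => rank i c ≤ (r : ℕ∞)) :=
      fun i hi => Finset.mem_filter.mpr ⟨Finset.mem_univ i, hrank i hi⟩
    have hres1 : ∑ i ∈ N', (B / n - ∑ c' : C, p i c') ≤
        ∑ i ∈ Finset.univ.filter (fun i : V => rank i c ≤ (r : ℕ∞)),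
          (B / n - ∑ c' : C, p i c') :=
      Finset.sum_le_sum_of_subset_of_nonneg hsub
        (fun i _ _ => sub_nonneg.mpr (hbud i))
    have hres2 : ∑ i ∈ N', ∑ c' ∈ Finset.univ.filter (fun c' : C => ¬ rank i c' ≤ (r : ℕ∞)), p i c' ≤
        ∑ i ∈ Finset.univ.filter (fun i : V => rank i c ≤ (r : ℕ∞)),
          ∑ c' ∈ Finset.univ.filter (fun c' : C => ¬ rank i c' ≤ (r : ℕ∞)), p i c' :=
      Finset.sum_le_sum_of_subset_of_nonneg hsub
        (fun i _ _ => Finset.sum_nonneg (fun c' _ => hnn i c'))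
    have hid : ∀ i : V, (B / n - ∑ c' : C, p i c') +
        ∑ c' ∈ Finset.univ.filter (fun c' : C => ¬ rank i c' ≤ (r : ℕ∞)), p i c'
        = B / n - ∑ c' ∈ G i, p i c' := by
      intro i
      have h := Finset.sum_filter_add_sum_filter_not Finset.univ
        (fun c' : C => rank i c' ≤ (r : ℕ∞)) (p i)
      rw [hGdef]
      linarith
    have hcomb : ∑ i ∈ N', (B / n - ∑ c' ∈ G i, p i c') ≤ 1 := by
      calc ∑ i ∈ N', (B / n - ∑ c' ∈ G i, p i c')
          = (∑ i ∈ N', (B / n - ∑ c' : C, p i c')) +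
            (∑ i ∈ N', ∑ c' ∈ Finset.univ.filter (fun c' : C => ¬ rank i c' ≤ (r : ℕ∞)), p i c') := by
            rw [← Finset.sum_add_distrib]
            exact Finset.sum_congr rfl (fun i _ => (hid i).symm)
        _ ≤ _ := add_le_add hres1 hres2
        _ ≤ 1 := hC5
    -- bound spending inside G by |S|
    have hspend : ∀ i ∈ N', ∑ c' ∈ G i, p i c' ≤ ∑ c' ∈ S, p i c' := by
      intro i hi
      have hstep : ∑ c' ∈ G i, p i c' = ∑ c' ∈ G i ∩ W, p i c' := by
        refine (Finset.sum_subset Finset.inter_subset_left ?_).symm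
        intro c' hc' hc'nW
        exact hout c' (fun hw => hc'nW (Finset.mem_inter.mpr ⟨hc', hw⟩)) i
      rw [hstep]
      refine Finset.sum_le_sum_of_subset_of_nonneg ?_ (fun c' _ _ => hnn i c')
      intro c' hc'
      rcases Finset.mem_inter.mp hc' with ⟨h1, h2⟩
      exact Finset.mem_inter.mpr ⟨Finset.mem_biUnion.mpr ⟨i, hi, h1⟩, h2⟩
    have hSsum : ∑ i ∈ N', ∑ c' ∈ S, p i c' ≤ (S.card : ℝ) := by
      rw [Finset.sum_comm]
      calc ∑ c' ∈ S, ∑ i ∈ N', p i c'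
          ≤ ∑ c' ∈ S, ∑ i : V, p i c' :=
            Finset.sum_le_sum (fun c' _ => Finset.sum_le_sum_of_subset_of_nonneg
              (Finset.subset_univ N') (fun i _ _ => hnn i c'))
        _ = ∑ c' ∈ S, (1:ℝ) := Finset.sum_congr rfl
            (fun c' hc' => hin c' (Finset.mem_inter.mp hc').2)
        _ = (S.card : ℝ) := by rw [Finset.sum_const, nsmul_eq_mul, mul_one]
    have hkey1 : (N'.card : ℝ) * (B / n) - (S.card : ℝ) ≤ 1 := by
      have hsplit : ∑ i ∈ N', (B / n - ∑ c' ∈ G i, p i c')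
          = (N'.card : ℝ) * (B / n) - ∑ i ∈ N', ∑ c' ∈ G i, p i c' := by
        rw [Finset.sum_sub_distrib, Finset.sum_const, nsmul_eq_mul]
      have hGS : ∑ i ∈ N', ∑ c' ∈ G i, p i c' ≤ (S.card : ℝ) :=
        le_trans (Finset.sum_le_sum hspend) hSsum
      rw [hsplit] at hcomb
      linarith
    -- arithmetic contradiction
    have hNs : (ℓ:ℝ) * n / (k:ℝ) ≤ (N'.card : ℝ) := by
      have h := (Rat.cast_le (K := ℝ)).mpr hsize
      push_cast at h
      rw [hndef]
      exact h
    have hScard : (S.card : ℝ) ≤ (ℓ:ℝ) - 1 := by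
      have h2 : (S.card : ℝ) + 1 ≤ (ℓ:ℝ) := by exact_mod_cast hcover
      linarith
    have hmul : (ℓ:ℝ) * n / (k:ℝ) * (B / n) ≤ (N'.card : ℝ) * (B / n) :=
      mul_le_mul_of_nonneg_right hNs hBn
    have e : (ℓ:ℝ) * n / (k:ℝ) * (B / n) = (ℓ:ℝ) * B / (k:ℝ) := by
      field_simp
    have e2 : (ℓ:ℝ) * B / (k:ℝ) - ((ℓ:ℝ) - 1) = (ℓ:ℝ) * (B - (k:ℝ)) / (k:ℝ) + 1 := by
      field_simp
      ring
    have hpos : 0 < (ℓ:ℝ) * (B - (k:ℝ)) / (k:ℝ) := by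
      apply div_pos _ hk0
      apply mul_pos (lt_of_lt_of_le one_pos hl0)
      rw [hBdef]; linarith
    rw [e] at hmul
    linarith
  exact ⟨W, hWcard, ⟨B, p, by rw [hBdef]; linarith, hps⟩, hpjr⟩
end

section
/- Consider the instance with 2 voters, candidates C = {c1,...,c6}, and committee size k = 3, in which voter 1 ranks c1 ≻ c2 ≻ c4 ≻ c5 ≻ c3 (and finds c6 unacceptable) and voter 2 ranks c1 ≻ c3 ≻ c4 ≻ c5 ≻ c2 (and finds c6 unacceptable). Then the committee W = {c1, c4, c5} satisfies rank-PJR+, but W is not rank-priceable with any budget B > k. -/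
open Finset

/-- in the 2-voter, 6-candidate instance with `k = 3` where voter 1
ranks `c1 ≻ c2 ≻ c4 ≻ c5 ≻ c3` (with `c6` unacceptable) and voter 2 ranks
`c1 ≻ c3 ≻ c4 ≻ c5 ≻ c2` (with `c6` unacceptable), the committee
`W = {c1, c4, c5}` satisfies rank-PJR+, but `W` is not rank-priceable with any
budget `B > k = 3`. (Candidate `cⱼ` is encoded as `j - 1 : Fin 6`.) -/
theorem rankpjrplus_not_rank_priceable_example :
    let rank : Fin 2 → Fin 6 → ℕ∞ :=
      ![![1, 2, 5, 3, 4, ⊤], ![1, 5, 2, 3, 4, ⊤]]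
    let A : Fin 2 → Finset (Fin 6) := fun _ => {0, 1, 2, 3, 4}
    let W : Finset (Fin 6) := {0, 3, 4}
    RankPJRplus rank 3 W ∧
      ∀ B : ℝ, (3 : ℝ) < B → ∀ p : Fin 2 → Fin 6 → ℝ,
        ¬ RankPriceSystem A rank W B p := by
  dsimp only
  constructor
  · rintro ⟨c, r, ℓ, N', hc, hr1, hr6, hℓ, hcard, hrank, hint⟩
    have hN2 : N'.card ≤ 2 := le_trans (card_le_card (subset_univ _)) (by simp)
    have hcard' : 2 * ℓ ≤ 3 * N'.card := by
      simp only [Fintype.card_fin] at hcard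
      rw [div_le_iff₀ (by norm_num)] at hcard
      push_cast at hcard
      have : (2 * ℓ : ℚ) ≤ 3 * N'.card := by linarith
      exact_mod_cast this
    have hℓ3 : ℓ ≤ 3 := by omega
    simp only [Fintype.card_fin] at hr6
    clear hcard
    interval_cases ℓ <;> interval_cases r <;>
      revert hc hrank hint hcard' <;> revert N' <;> revert c <;> decide
  · rintro B hB p ⟨hpos, hA, hbud, hW, hnW, hC5⟩
    have h1 := hC5 1 (by decide) 2 (by norm_num) (by simp)
    have h2 := hC5 2 (by decide) 2 (by norm_num) (by simp)
    have hf1 : (univ.filter (fun i : Fin 2 =>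
        ![![1, 2, 5, 3, 4, ⊤], ![1, 5, 2, 3, 4, ⊤]] i 1 ≤ ((2:ℕ) : ℕ∞))) = {0} := by decide
    have hf2 : (univ.filter (fun i : Fin 2 =>
        ![![1, 2, 5, 3, 4, ⊤], ![1, 5, 2, 3, 4, ⊤]] i 2 ≤ ((2:ℕ) : ℕ∞))) = {1} := by decide
    have hg1 : (univ.filter (fun c' : Fin 6 =>
        ¬ ![![1, 2, 5, 3, 4, ⊤], ![1, 5, 2, 3, 4, ⊤]] 0 c' ≤ ((2:ℕ) : ℕ∞))) = {2, 3, 4, 5} := by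
      decide
    have hg2 : (univ.filter (fun c' : Fin 6 =>
        ¬ ![![1, 2, 5, 3, 4, ⊤], ![1, 5, 2, 3, 4, ⊤]] 1 c' ≤ ((2:ℕ) : ℕ∞))) = {1, 3, 4, 5} := by
      decide
    rw [hf1] at h1; rw [hf2] at h2
    simp only [Finset.sum_singleton] at h1 h2
    rw [hg1] at h1; rw [hg2] at h2
    have hw0 := hW 0 (by decide)
    have hn1 := hnW 1 (by decide)
    have hn2 := hnW 2 (by decide)
    simp only [Fin.sum_univ_two, Fin.sum_univ_six, Fintype.card_fin, Nat.cast_ofNat,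
      Finset.sum_singleton, Finset.sum_insert, Finset.mem_insert, Finset.mem_singleton,
      Finset.sum_singleton] at h1 h2 hw0 hn1 hn2
    have p01 : p 0 1 = 0 := by have := (hpos 0 1).1; have := (hpos 1 1).1; linarith
    have p11 : p 1 1 = 0 := by have := (hpos 0 1).1; have := (hpos 1 1).1; linarith
    have p02 : p 0 2 = 0 := by have := (hpos 0 2).1; have := (hpos 1 2).1; linarith
    have p12 : p 1 2 = 0 := by have := (hpos 0 2).1; have := (hpos 1 2).1; linarith
    have e1 : ∑ c' ∈ ({2,3,4,5} : Finset (Fin 6)), p 0 c' = p 0 2 + p 0 3 + p 0 4 + p 0 5 := by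
      rw [Finset.sum_insert (by decide), Finset.sum_insert (by decide),
        Finset.sum_insert (by decide), Finset.sum_singleton]; ring
    have e2 : ∑ c' ∈ ({1,3,4,5} : Finset (Fin 6)), p 1 c' = p 1 1 + p 1 3 + p 1 4 + p 1 5 := by
      rw [Finset.sum_insert (by decide), Finset.sum_insert (by decide),
        Finset.sum_insert (by decide), Finset.sum_singleton]; ring
    rw [e1] at h1; rw [e2] at h2
    have hB2 : (3:ℝ)/2 < B/2 := by linarith
    linarith
end

section
/- Consider the instance with 2 voters, candidates C = {c1, c2, c3, c4}, and committee size k = 2, in which voter 1 ranks c1 ≻ c2 ≻ c3 ≻ c4 and voter 2 ranks c4 ≻ c2 ≻ c3 ≻ c1. Then no feasible committee (of size at most 2) satisfies rank-EJR+. -/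
/-- A committee `W` satisfies rank-EJR+: there is no candidate `c ∉ W`, rank
`r ∈ {1,…,|C|}`, `ℓ ≥ 1`, and group `N'` with `|N'| ≥ ℓ·n/k` such that
`rank i c ≤ r` and `|A_i^r ∩ W| < ℓ` for all `i ∈ N'`. -/
def RankEJRplus {V C : Type*} [Fintype V] [Fintype C] [DecidableEq C]
    (rank : V → C → ℕ∞) (k : ℕ) (W : Finset C) : Prop :=
  ¬ ∃ (c : C) (r ℓ : ℕ) (N' : Finset V), c ∉ W ∧
      1 ≤ r ∧ r ≤ Fintype.card C ∧ 1 ≤ ℓ ∧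
      (ℓ : ℚ) * (Fintype.card V) / k ≤ N'.card ∧
      (∀ i ∈ N', rank i c ≤ (r : ℕ∞) ∧
        ((Finset.univ.filter fun c' : C => rank i c' ≤ (r : ℕ∞)) ∩ W).card < ℓ)

/-- in the 2-voter, 4-candidate instance with `k = 2` where voter 1
ranks `c1 ≻ c2 ≻ c3 ≻ c4` and voter 2 ranks `c4 ≻ c2 ≻ c3 ≻ c1`, no feasible
committee (of size at most 2) satisfies rank-EJR+.
(Candidate `cⱼ` is encoded as `j - 1 : Fin 4`.) -/
theorem rankejrplus_unsatisfiable_example :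
    let rank : Fin 2 → Fin 4 → ℕ∞ := fun i c =>
      ((![![1, 2, 3, 4], ![4, 2, 3, 1]] : Fin 2 → Fin 4 → ℕ) i c : ℕ∞)
    ∀ W : Finset (Fin 4), W.card ≤ 2 → ¬ RankEJRplus rank 2 W := by
  intro rank W hW
  rw [RankEJRplus, not_not]
  by_cases h0 : (0 : Fin 4) ∈ W
  · by_cases h3 : (3 : Fin 4) ∈ W
    · -- W = {0, 3}
      have hsub : ({0, 3} : Finset (Fin 4)) ⊆ W := by
        intro x hx
        simp only [Finset.mem_insert, Finset.mem_singleton] at hx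
        rcases hx with h | h <;> subst h <;> assumption
      have hWeq : W = ({0, 3} : Finset (Fin 4)) :=
        (Finset.eq_of_subset_of_card_le hsub (by simpa using hW)).symm
      subst hWeq
      refine ⟨1, 2, 2, Finset.univ, ?_, ?_, ?_, ?_, ?_, ?_⟩
      · decide
      · decide
      · decide
      · decide
      · norm_num
      · decide
    · -- 3 ∉ W : voter 2's top candidate is missing
      refine ⟨3, 1, 1, {1}, h3, le_refl _, by decide, le_refl _, by norm_num, ?_⟩
      intro i hi
      simp only [Finset.mem_singleton] at hi
      subst hi
      constructor
      · decide
      · have hfil : (Finset.univ.filter fun c' : Fin 4 => rank 1 c' ≤ ((1 : ℕ) : ℕ∞))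
            = ({3} : Finset (Fin 4)) := by decide
        rw [hfil, Finset.singleton_inter_of_notMem h3]
        decide
  · -- 0 ∉ W : voter 1's top candidate is missing
    refine ⟨0, 1, 1, {0}, h0, le_refl _, by decide, le_refl _, by norm_num, ?_⟩
    intro i hi
    simp only [Finset.mem_singleton] at hi
    subst hi
    constructor
    · decide
    · have hfil : (Finset.univ.filter fun c' : Fin 4 => rank 0 c' ≤ ((1 : ℕ) : ℕ∞))
          = ({0} : Finset (Fin 4)) := by decide
      rw [hfil, Finset.singleton_inter_of_notMem h0]
      decide
end

section
/- For every approval instance, every feasible committee W satisfying EJR+ is ((ℓ−1)/2)-representative: for every natural number ℓ ≥ 1, every candidate c ∈ C∖W, and every group N' ⊆ N_c with |N'| ≥ ℓ·n/k, the average (1/|N'|)·Σ_{i∈N'} |A_i ∩ W| is at least (ℓ−1)/2. -/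
open Finset

/-- every feasible committee satisfying EJR+ is
`((ℓ−1)/2)`-representative: for every `ℓ ≥ 1`, candidate `c ∉ W`, and group
`N' ⊆ N_c` with `|N'| ≥ ℓ·n/k`, the average `(1/|N'|)·∑_{i∈N'} |A i ∩ W|` is at
least `(ℓ−1)/2`. -/
theorem ejrplus_implies_half_representative {V C : Type*} [Fintype V] [Fintype C]
    [DecidableEq V] [DecidableEq C]
    (A : V → Finset C) (k : ℕ) (W : Finset C)
    (hn : 1 ≤ Fintype.card V) (hk1 : 1 ≤ k) (hk2 : k ≤ Fintype.card C)
    (hW : W.card ≤ k) (h : EJRplus A k W) :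
    ∀ ℓ : ℕ, 1 ≤ ℓ → ∀ c : C, c ∉ W → ∀ N' : Finset V,
      (∀ i ∈ N', c ∈ A i) → (ℓ : ℝ) * (Fintype.card V) / k ≤ N'.card →
      ((ℓ : ℝ) - 1) / 2 ≤ (1 / (N'.card : ℝ)) * ∑ i ∈ N', ((A i ∩ W).card : ℝ) := by
  intro ℓ hℓ c hc N' hmem hsize
  set n := Fintype.card V with hn'
  have hk0 : (0:ℝ) < k := by exact_mod_cast hk1
  have hn0 : (0:ℝ) < n := by exact_mod_cast hn
  have hℓ0 : (0:ℝ) < ℓ := by exact_mod_cast hℓ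
  have hN0 : (0:ℝ) < N'.card := lt_of_lt_of_le (by positivity) hsize
  set f : V → ℕ := fun i => (A i ∩ W).card with hf
  -- EJR+ bound on each level
  have hT : ∀ j : ℕ, 1 ≤ j →
      ((N'.filter (fun i => f i < j)).card : ℝ) < (j : ℝ) * n / k := by
    intro j hj
    by_contra hcon
    push_neg at hcon
    apply h
    refine ⟨c, N'.filter (fun i => f i < j), j, hj, hc, ?_, ?_⟩
    · rw [← Rat.cast_le (K := ℝ)]
      push_cast
      exact hcon
    · intro i hi
      rw [mem_filter] at hi
      exact ⟨hmem i hi.1, hi.2⟩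
  -- complement bound
  have hS : ∀ j : ℕ, 1 ≤ j →
      ((N'.card : ℝ)) - (j : ℝ) * N'.card / ℓ ≤ ((N'.filter (fun i => j ≤ f i)).card : ℝ) := by
    intro j hj
    have hsplit : (N'.filter (fun i => j ≤ f i)).card + (N'.filter (fun i => f i < j)).card
        = N'.card := by
      rw [← Finset.card_filter_add_card_filter_not (s := N') (p := fun i => j ≤ f i)]
      congr 1
      apply Finset.card_bij (fun a _ => a)
      · intro a ha; simp only [mem_filter, not_le] at ha ⊢; exact ⟨ha.1, ha.2⟩
      · intro a ha b hb hab; exact hab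
      · intro b hb; simp only [mem_filter, not_le] at hb ⊢; exact ⟨b, ⟨hb.1, hb.2⟩, rfl⟩
    have h1 : ((N'.filter (fun i => f i < j)).card : ℝ) < (j : ℝ) * n / k := hT j hj
    have h2 : (j : ℝ) * n / k ≤ (j : ℝ) * N'.card / ℓ := by
      rw [div_le_div_iff₀ hk0 hℓ0]
      have : (ℓ : ℝ) * n / k ≤ N'.card := hsize
      rw [div_le_iff₀ hk0] at this
      calc (j : ℝ) * n * ℓ = (j : ℝ) * ((ℓ : ℝ) * n) := by ring
        _ ≤ (j : ℝ) * ((N'.card : ℝ) * k) := by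
            apply mul_le_mul_of_nonneg_left this (by positivity)
        _ = (j : ℝ) * N'.card * k := by ring
    have := hsplit
    have hcast : ((N'.filter (fun i => j ≤ f i)).card : ℝ)
        + ((N'.filter (fun i => f i < j)).card : ℝ) = N'.card := by exact_mod_cast this
    linarith
  -- layer cake
  have hsum : ∑ j ∈ Finset.Icc 1 (ℓ - 1), ((N'.filter (fun i => j ≤ f i)).card)
      ≤ ∑ i ∈ N', f i := by
    have : ∀ j, (N'.filter (fun i => j ≤ f i)).card = ∑ i ∈ N', if j ≤ f i then 1 else 0 := by
      intro j; rw [Finset.card_filter]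
    calc ∑ j ∈ Finset.Icc 1 (ℓ - 1), (N'.filter (fun i => j ≤ f i)).card
        = ∑ j ∈ Finset.Icc 1 (ℓ - 1), ∑ i ∈ N', if j ≤ f i then 1 else 0 := by
          simp_rw [this]
      _ = ∑ i ∈ N', ∑ j ∈ Finset.Icc 1 (ℓ - 1), if j ≤ f i then 1 else 0 :=
          Finset.sum_comm
      _ ≤ ∑ i ∈ N', f i := by
          apply Finset.sum_le_sum
          intro i _
          rw [← Finset.card_filter]
          calc ((Finset.Icc 1 (ℓ - 1)).filter (fun j => j ≤ f i)).card
              ≤ (Finset.Icc 1 (f i)).card := by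
                apply Finset.card_le_card
                intro j hj
                simp only [mem_filter, Finset.mem_Icc] at hj ⊢
                exact ⟨hj.1.1, hj.2⟩
            _ = f i := by rw [Nat.card_Icc]; omega
  -- real version
  have hsumR : ∑ j ∈ Finset.Icc 1 (ℓ - 1), (((N'.filter (fun i => j ≤ f i)).card : ℝ))
      ≤ ∑ i ∈ N', (f i : ℝ) := by exact_mod_cast hsum
  have hlow : ∑ j ∈ Finset.Icc 1 (ℓ - 1), ((N'.card : ℝ) - (j : ℝ) * N'.card / ℓ)
      ≤ ∑ j ∈ Finset.Icc 1 (ℓ - 1), (((N'.filter (fun i => j ≤ f i)).card : ℝ)) := by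
    apply Finset.sum_le_sum
    intro j hj
    exact hS j (Finset.mem_Icc.mp hj).1
  -- compute the lower-bound sum
  have hgauss : ∀ m : ℕ, ∑ j ∈ Finset.Icc 1 m, (j : ℝ) = (m : ℝ) * (m + 1) / 2 := by
    intro m
    induction m with
    | zero => simp
    | succ m ih =>
      rw [Finset.sum_Icc_succ_top (by omega : 1 ≤ m + 1), ih]
      push_cast
      ring
  have hm : ((ℓ - 1 : ℕ) : ℝ) = (ℓ : ℝ) - 1 := by
    have : (1:ℕ) ≤ ℓ := hℓ
    push_cast [Nat.cast_sub this]
    ring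
  have hcardIcc : ((Finset.Icc 1 (ℓ - 1)).card : ℝ) = (ℓ : ℝ) - 1 := by
    rw [Nat.card_Icc]
    have : ℓ - 1 + 1 - 1 = ℓ - 1 := by omega
    rw [this, hm]
  have hlowval : ∑ j ∈ Finset.Icc 1 (ℓ - 1), ((N'.card : ℝ) - (j : ℝ) * N'.card / ℓ)
      = ((ℓ : ℝ) - 1) / 2 * N'.card := by
    rw [Finset.sum_sub_distrib, Finset.sum_const, nsmul_eq_mul, hcardIcc]
    have : ∑ j ∈ Finset.Icc 1 (ℓ - 1), ((j : ℝ) * N'.card / ℓ)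
        = (∑ j ∈ Finset.Icc 1 (ℓ - 1), (j : ℝ)) * N'.card / ℓ := by
      rw [Finset.sum_mul, Finset.sum_div]
    rw [this, hgauss, hm]
    have h1 : ((ℓ : ℝ) - 1) + 1 = ℓ := by ring
    rw [h1]
    field_simp
    ring
  rw [one_div, inv_mul_eq_div, le_div_iff₀ hN0]
  calc ((ℓ : ℝ) - 1) / 2 * N'.card
      = ∑ j ∈ Finset.Icc 1 (ℓ - 1), ((N'.card : ℝ) - (j : ℝ) * N'.card / ℓ) := hlowval.symm
    _ ≤ ∑ j ∈ Finset.Icc 1 (ℓ - 1), (((N'.filter (fun i => j ≤ f i)).card : ℝ)) := hlow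
    _ ≤ ∑ i ∈ N', (f i : ℝ) := hsumR
end
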